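/- arXiv:1807.08996 — 5 statements merged into one kernel-verified Lean document; each statement's English description precedes it below -/
import Mathlib

section
/- Every linear subspace F of the real vector space of symmetric 3×3 real matrices with dim F ≥ 3 contains a matrix having three pairwise distinct eigenvalues. -/
open Matrix Polynomial Filter

noncomputable def symTF (a : Matrix (Fin 3) (Fin 3) ℝ) : Matrix (Fin 3) (Fin 3) ℝ :=
  a - (Matrix.trace a / 3) • 1

noncomputable def symDelta (a : Matrix (Fin 3) (Fin 3) ℝ) : ℝ :=
  (Matrix.trace (symTF a * symTF a)) ^ 3 - 54 * (Matrix.det (symTF a)) ^ 2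


lemma herm_of_symm {a : Matrix (Fin 3) (Fin 3) ℝ} (h : aᵀ = a) : a.IsHermitian := by
  rwa [Matrix.IsHermitian, Matrix.conjTranspose_eq_transpose_of_trivial]

lemma conj_facts (a : Matrix (Fin 3) (Fin 3) ℝ) (ha : a.IsHermitian) (t : ℝ) :
    Matrix.trace a = ∑ i, ha.eigenvalues i ∧
    Matrix.trace ((a - t • 1) * (a - t • 1)) = ∑ i, (ha.eigenvalues i - t) ^ 2 ∧
    Matrix.det (a - t • 1) = ∏ i, (ha.eigenvalues i - t) := by
  set U : Matrix (Fin 3) (Fin 3) ℝ := (ha.eigenvectorUnitary : Matrix (Fin 3) (Fin 3) ℝ) with hU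
  have hU1 : U * star U = 1 := (Matrix.mem_unitaryGroup_iff).mp ha.eigenvectorUnitary.2
  have hU2 : star U * U = 1 := (Matrix.mem_unitaryGroup_iff').mp ha.eigenvectorUnitary.2
  have htr : ∀ M : Matrix (Fin 3) (Fin 3) ℝ, Matrix.trace (U * M * star U) = Matrix.trace M := by
    intro M
    rw [Matrix.trace_mul_cycle, hU2, Matrix.one_mul]
  have hdet : ∀ M : Matrix (Fin 3) (Fin 3) ℝ, Matrix.det (U * M * star U) = Matrix.det M := by
    intro M
    rw [Matrix.det_mul_right_comm, hU1, Matrix.one_mul]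
  have hspec : a = U * Matrix.diagonal ha.eigenvalues * star U := by
    have := ha.spectral_theorem
    simpa using this
  have hsub : a - t • 1 = U * Matrix.diagonal (fun i => ha.eigenvalues i - t) * star U := by
    have h1 : Matrix.diagonal (fun i : Fin 3 => ha.eigenvalues i - t)
        = Matrix.diagonal ha.eigenvalues - t • 1 := by
      rw [Matrix.smul_one_eq_diagonal]
      rw [← Matrix.diagonal_sub]
    rw [h1, Matrix.mul_sub, Matrix.sub_mul, ← hspec, Matrix.mul_smul, Matrix.mul_one,
      Matrix.smul_mul, hU1]
  refine ⟨?_, ?_, ?_⟩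
  · conv_lhs => rw [hspec]
    rw [htr, Matrix.trace_diagonal]
  · rw [hsub]
    have hsq : (U * Matrix.diagonal (fun i => ha.eigenvalues i - t) * star U)
        * (U * Matrix.diagonal (fun i => ha.eigenvalues i - t) * star U)
        = U * (Matrix.diagonal (fun i => ha.eigenvalues i - t)
            * Matrix.diagonal (fun i => ha.eigenvalues i - t)) * star U := by
      simp only [Matrix.mul_assoc]
      rw [← Matrix.mul_assoc (star U) U, hU2, Matrix.one_mul]
    rw [hsq, Matrix.diagonal_mul_diagonal, htr, Matrix.trace_diagonal]
    simp [pow_two]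
  · rw [hsub, hdet, Matrix.det_diagonal]

lemma delta_eq (a : Matrix (Fin 3) (Fin 3) ℝ) (ha : a.IsHermitian) :
    symDelta a = 2 * ((ha.eigenvalues 0 - ha.eigenvalues 1) * (ha.eigenvalues 0 - ha.eigenvalues 2)
      * (ha.eigenvalues 1 - ha.eigenvalues 2)) ^ 2 := by
  obtain ⟨h1, h2, h3⟩ := conj_facts a ha (Matrix.trace a / 3)
  set x := ha.eigenvalues 0 with hx
  set y := ha.eigenvalues 1 with hy
  set z := ha.eigenvalues 2 with hz
  have ht : Matrix.trace a = x + y + z := by rw [h1, Fin.sum_univ_three]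
  rw [symDelta, symTF, h2, h3, Fin.sum_univ_three, Fin.prod_univ_three, ht]
  ring

lemma ncard_iff (a : Matrix (Fin 3) (Fin 3) ℝ) (ha : a.IsHermitian) :
    (spectrum ℝ a).ncard = 3 ↔ symDelta a ≠ 0 := by
  have hs : spectrum ℝ a = Set.range ha.eigenvalues := ha.spectrum_real_eq_range_eigenvalues
  have hrange : Set.range ha.eigenvalues = ↑(Finset.image ha.eigenvalues Finset.univ) := by
    simp
  have hncard : (spectrum ℝ a).ncard = (Finset.image ha.eigenvalues Finset.univ).card := by
    rw [hs, hrange, Set.ncard_coe_finset]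
  rw [hncard, delta_eq a ha]
  constructor
  · intro hcard
    have hinj : Set.InjOn ha.eigenvalues ↑(Finset.univ : Finset (Fin 3)) :=
      Finset.injOn_of_card_image_eq (by simpa using hcard)
    have h01 : ha.eigenvalues 0 ≠ ha.eigenvalues 1 := fun h =>
      (by decide : (0 : Fin 3) ≠ 1) (hinj (by simp) (by simp) h)
    have h02 : ha.eigenvalues 0 ≠ ha.eigenvalues 2 := fun h =>
      (by decide : (0 : Fin 3) ≠ 2) (hinj (by simp) (by simp) h)
    have h12 : ha.eigenvalues 1 ≠ ha.eigenvalues 2 := fun h =>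
      (by decide : (1 : Fin 3) ≠ 2) (hinj (by simp) (by simp) h)
    exact mul_ne_zero two_ne_zero (pow_ne_zero _ (mul_ne_zero
      (mul_ne_zero (sub_ne_zero.mpr h01) (sub_ne_zero.mpr h02)) (sub_ne_zero.mpr h12)))
  · intro hne
    have h01 : ha.eigenvalues 0 ≠ ha.eigenvalues 1 := by
      intro h; apply hne; rw [h]; ring
    have h02 : ha.eigenvalues 0 ≠ ha.eigenvalues 2 := by
      intro h; apply hne; rw [h]; ring
    have h12 : ha.eigenvalues 1 ≠ ha.eigenvalues 2 := by
      intro h; apply hne; rw [h]; ring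
    have himg : Finset.image ha.eigenvalues Finset.univ
        = {ha.eigenvalues 0, ha.eigenvalues 1, ha.eigenvalues 2} := by
      ext x
      simp only [Finset.mem_image, Finset.mem_univ, true_and, Finset.mem_insert,
        Finset.mem_singleton]
      constructor
      · rintro ⟨i, rfl⟩
        fin_cases i <;> simp
      · rintro (rfl | rfl | rfl)
        exacts [⟨0, rfl⟩, ⟨1, rfl⟩, ⟨2, rfl⟩]
    rw [himg, Finset.card_insert_of_notMem (by simp [h01, h02]),
      Finset.card_insert_of_notMem (by simp [h12]), Finset.card_singleton]

lemma cubic_has_root_aux (Q : ℝ[X]) (h3 : Q.natDegree = 3) (hlc : 0 < Q.leadingCoeff) :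
    ∃ x : ℝ, Q.IsRoot x := by
  have hdeg : 0 < Q.degree := by
    rw [← Polynomial.natDegree_pos_iff_degree_pos]
    omega
  have htop : Tendsto (fun x => Q.eval x) atTop atTop :=
    Q.tendsto_atTop_of_leadingCoeff_nonneg hdeg hlc.le
  set S : ℝ[X] := Q.comp (-X) with hS
  have hSdeg : S.natDegree = 3 := by
    rw [hS, Polynomial.natDegree_comp]
    simp [h3]
  have hSlc : S.leadingCoeff = -Q.leadingCoeff := by
    rw [hS, Polynomial.leadingCoeff_comp (by simp)]
    simp [h3]
    ring
  have hSdeg' : 0 < S.degree := by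
    rw [← Polynomial.natDegree_pos_iff_degree_pos]
    omega
  have hbot : Tendsto (fun x => S.eval x) atTop atBot :=
    S.tendsto_atBot_of_leadingCoeff_nonpos hSdeg' (by rw [hSlc]; linarith)
  obtain ⟨b, hb1, hb2⟩ := ((htop.eventually_ge_atTop 1).and (eventually_ge_atTop 0)).exists
  obtain ⟨c, hc1, hc2⟩ := ((hbot.eventually_le_atBot (-1)).and (eventually_ge_atTop (-b))).exists
  have hc3 : Q.eval (-c) ≤ -1 := by
    rw [hS] at hc1
    simpa using hc1
  have hord : -c ≤ b := by linarith
  have hcont : ContinuousOn (fun x => Q.eval x) (Set.Icc (-c) b) :=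
    (Polynomial.continuous Q).continuousOn
  have : (0 : ℝ) ∈ Set.Icc (Q.eval (-c)) (Q.eval b) := by
    constructor <;> linarith
  obtain ⟨x, _, hx⟩ := intermediate_value_Icc hord hcont this
  exact ⟨x, hx⟩

lemma cubic_has_root (Q : ℝ[X]) (h3 : Q.natDegree = 3) : ∃ x : ℝ, Q.IsRoot x := by
  have hQ0 : Q ≠ 0 := fun h => by simp [h] at h3
  rcases lt_trichotomy Q.leadingCoeff 0 with h | h | h
  · obtain ⟨x, hx⟩ := cubic_has_root_aux (-Q) (by simp [h3]) (by simp [Polynomial.leadingCoeff_neg]; linarith)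
    exact ⟨x, by simpa using hx⟩
  · exact absurd (Polynomial.leadingCoeff_eq_zero.mp h) hQ0
  · exact cubic_has_root_aux Q h3 h

lemma trace_sq_pos (M : Matrix (Fin 3) (Fin 3) ℝ) (hs : Mᵀ = M) (h0 : M ≠ 0) :
    0 < Matrix.trace (M * M) := by
  have hsym : ∀ i j, M j i = M i j := fun i j => by
    conv_lhs => rw [← hs]
    rfl
  have htr : Matrix.trace (M * M) = ∑ i, ∑ j, M i j ^ 2 := by
    simp only [Matrix.trace, Matrix.diag, Matrix.mul_apply]
    refine Finset.sum_congr rfl fun i _ => Finset.sum_congr rfl fun j _ => ?_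
    rw [hsym i j, pow_two]
  rw [htr]
  obtain ⟨i, j, hij⟩ : ∃ i j, M i j ≠ 0 := by
    by_contra hc
    push_neg at hc
    exact h0 (by ext i j; simpa using hc i j)
  refine Finset.sum_pos' (fun i _ => Finset.sum_nonneg fun j _ => sq_nonneg _) ?_
  exact ⟨i, Finset.mem_univ i, Finset.sum_pos' (fun j _ => sq_nonneg _)
    ⟨j, Finset.mem_univ j, by positivity⟩⟩

noncomputable def symTFL : Matrix (Fin 3) (Fin 3) ℝ →ₗ[ℝ] Matrix (Fin 3) (Fin 3) ℝ where
  toFun a := symTF a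
  map_add' a b := by
    simp only [symTF, Matrix.trace_add, add_div, add_smul]
    abel
  map_smul' c a := by
    simp only [symTF, Matrix.trace_smul, RingHom.id_apply, smul_sub, smul_smul, smul_eq_mul]
    rw [mul_div_assoc]

/-- Every linear subspace `F` of the real symmetric `3 × 3` matrices with
`dim F ≥ 3` contains a matrix having three pairwise distinct eigenvalues. -/
theorem subspace_dim_ge_three_contains_orthotropic
    (F : Submodule ℝ (Matrix (Fin 3) (Fin 3) ℝ))
    (hsym : ∀ m ∈ F, mᵀ = m) (hdim : 3 ≤ Module.finrank ℝ F) :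
    ∃ a ∈ F, (spectrum ℝ a).ncard = 3 := by
  by_contra hcon
  push_neg at hcon
  have hdelta : ∀ a ∈ F, symDelta a = 0 := by
    intro a haF
    by_contra hd
    exact (hcon a haF) ((ncard_iff a (herm_of_symm (hsym a haF))).mpr hd)
  -- the linear map F → matrices, a ↦ trace-free part
  set φ : F →ₗ[ℝ] Matrix (Fin 3) (Fin 3) ℝ := symTFL.comp F.subtype with hφ
  -- kernel has rank ≤ 1
  have hker : Module.finrank ℝ (LinearMap.ker φ) ≤ 1 := by
    set κ : LinearMap.ker φ →ₗ[ℝ] ℝ :=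
      (Matrix.traceLinearMap (Fin 3) ℝ ℝ).comp (F.subtype.comp (LinearMap.ker φ).subtype) with hκ
    have hinj : Function.Injective κ := by
      intro u v huv
      have hu : symTF (u : F) = 0 := u.2
      have hv : symTF (v : F) = 0 := v.2
      have htr : Matrix.trace ((u : F) : Matrix (Fin 3) (Fin 3) ℝ)
          = Matrix.trace ((v : F) : Matrix (Fin 3) (Fin 3) ℝ) := huv
      have hu' : ((u : F) : Matrix (Fin 3) (Fin 3) ℝ)
          = (Matrix.trace ((u : F) : Matrix (Fin 3) (Fin 3) ℝ) / 3) • 1 := by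
        have := sub_eq_zero.mp hu
        exact this
      have hv' : ((v : F) : Matrix (Fin 3) (Fin 3) ℝ)
          = (Matrix.trace ((v : F) : Matrix (Fin 3) (Fin 3) ℝ) / 3) • 1 := sub_eq_zero.mp hv
      have : ((u : F) : Matrix (Fin 3) (Fin 3) ℝ) = ((v : F) : Matrix (Fin 3) (Fin 3) ℝ) := by
        rw [hu', hv', htr]
      exact Subtype.ext (Subtype.ext this)
    calc Module.finrank ℝ (LinearMap.ker φ) ≤ Module.finrank ℝ ℝ :=
          LinearMap.finrank_le_finrank_of_injective hinj
      _ = 1 := Module.finrank_self ℝ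
  have hrange : 2 ≤ Module.finrank ℝ (LinearMap.range φ) := by
    have := LinearMap.finrank_range_add_finrank_ker φ
    omega
  obtain ⟨v, hv⟩ := exists_linearIndependent_of_le_finrank hrange
  have hv' : LinearIndependent ℝ (fun i => ((v i : Matrix (Fin 3) (Fin 3) ℝ))) :=
    hv.map' (LinearMap.range φ).subtype (Submodule.ker_subtype _)
  set A₀ : Matrix (Fin 3) (Fin 3) ℝ := ↑(v 0) with hA₀
  set B₀ : Matrix (Fin 3) (Fin 3) ℝ := ↑(v 1) with hB₀
  have hpair : ∀ c d : ℝ, c • A₀ + d • B₀ = 0 → c = 0 ∧ d = 0 := by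
    intro c d hcd
    have := Fintype.linearIndependent_iff.mp hv' ![c, d] ?_
    · exact ⟨this 0, this 1⟩
    · rw [Fin.sum_univ_two]
      simpa using hcd
  have hA₀ne : A₀ ≠ 0 := by
    intro h
    have := (hpair 1 0 (by simp [h])).1
    norm_num at this
  have hmne : ∀ s : ℝ, s • A₀ + B₀ ≠ 0 := by
    intro s h
    have := (hpair s 1 (by simpa using h)).2
    norm_num at this
  -- preimages
  obtain ⟨x, hx⟩ : ∃ x : F, φ x = A₀ := (v 0).2
  obtain ⟨y, hy⟩ : ∃ y : F, φ y = B₀ := (v 1).2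
  have hφ' : ∀ z : F, φ z = symTF (z : Matrix (Fin 3) (Fin 3) ℝ) := fun z => rfl
  -- symmetry of the trace-free parts
  have hsymTF : ∀ m ∈ F, (symTF m)ᵀ = symTF m := by
    intro m hm
    simp [symTF, Matrix.transpose_sub, Matrix.transpose_smul, Matrix.transpose_one, hsym m hm]
  have hsA₀ : A₀ᵀ = A₀ := by rw [← hx, hφ']; exact hsymTF _ x.2
  have hsB₀ : B₀ᵀ = B₀ := by rw [← hy, hφ']; exact hsymTF _ y.2
  -- the key scalar identity along the line s ↦ s • x + y
  have hkey : ∀ s : ℝ, (Matrix.trace ((s • A₀ + B₀) * (s • A₀ + B₀))) ^ 3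
      = 54 * (Matrix.det (s • A₀ + B₀)) ^ 2 := by
    intro s
    have hmem : ((s • x + y : F) : Matrix (Fin 3) (Fin 3) ℝ) ∈ F := (s • x + y : F).2
    have hd := hdelta _ hmem
    have htf : symTF ((s • x + y : F) : Matrix (Fin 3) (Fin 3) ℝ) = s • A₀ + B₀ := by
      rw [← hφ' (s • x + y), _root_.map_add, LinearMap.map_smul, hx, hy]
    rw [symDelta, htf] at hd
    linarith
  -- polynomials
  set P : ℝ[X] := C (Matrix.trace (A₀ * A₀)) * X ^ 2
      + C (2 * Matrix.trace (A₀ * B₀)) * X + C (Matrix.trace (B₀ * B₀)) with hP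
  have hPeval : ∀ s : ℝ, P.eval s = Matrix.trace ((s • A₀ + B₀) * (s • A₀ + B₀)) := by
    intro s
    have : (s • A₀ + B₀) * (s • A₀ + B₀)
        = (s * s) • (A₀ * A₀) + s • (A₀ * B₀) + s • (B₀ * A₀) + B₀ * B₀ := by
      rw [Matrix.add_mul, Matrix.mul_add, Matrix.mul_add, Matrix.smul_mul, Matrix.mul_smul,
        Matrix.mul_smul, Matrix.smul_mul, smul_smul]
      abel
    rw [this]
    simp only [Matrix.trace_add, Matrix.trace_smul, hP, eval_add, eval_mul, eval_C, eval_pow,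
      eval_X, smul_eq_mul]
    rw [Matrix.trace_mul_comm B₀ A₀]
    ring
  set N : Matrix (Fin 3) (Fin 3) ℝ[X] :=
    Matrix.of fun i j => C (A₀ i j) * X + C (B₀ i j) with hN
  set Q : ℝ[X] := N.det with hQ
  have hQeval : ∀ s : ℝ, Q.eval s = Matrix.det (s • A₀ + B₀) := by
    intro s
    have h1 : Q.eval s = ((evalRingHom s).mapMatrix N).det := by
      rw [hQ, ← RingHom.map_det]
      rfl
    rw [h1]
    congr 1
    ext i j
    simp only [hN, RingHom.mapMatrix_apply, Matrix.map_apply, Matrix.of_apply, coe_evalRingHom,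
      eval_add, eval_mul, eval_C, eval_X, Matrix.add_apply, Matrix.smul_apply, smul_eq_mul]
    ring
  have hPQ : P ^ 3 = C 54 * Q ^ 2 := by
    apply Polynomial.funext
    intro s
    rw [eval_pow, eval_mul, eval_C, eval_pow, hPeval, hQeval]
    exact hkey s
  have htrA : 0 < Matrix.trace (A₀ * A₀) := trace_sq_pos A₀ hsA₀ hA₀ne
  have hP2 : P.natDegree = 2 := Polynomial.natDegree_quadratic htrA.ne'
  have hQne : Q ≠ 0 := by
    intro h
    rw [h] at hPQ
    have hP0 : P = 0 := by
      have : P ^ 3 = 0 := by rw [hPQ]; ring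
      exact pow_eq_zero_iff (by norm_num) |>.mp this
    have := hPeval 0
    rw [hP0] at this
    simp only [eval_zero] at this
    have hpos : 0 < Matrix.trace (((0:ℝ) • A₀ + B₀) * ((0:ℝ) • A₀ + B₀)) := by
      refine trace_sq_pos _ ?_ (hmne 0)
      rw [Matrix.transpose_add, Matrix.transpose_smul, hsA₀, hsB₀]
    rw [← this] at hpos
    exact lt_irrefl _ hpos
  have hQ3 : Q.natDegree = 3 := by
    have h6 : (P ^ 3).natDegree = 6 := by
      rw [Polynomial.natDegree_pow, hP2]
    rw [hPQ, Polynomial.natDegree_C_mul (by norm_num : (54 : ℝ) ≠ 0),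
      Polynomial.natDegree_pow] at h6
    omega
  obtain ⟨s₀, hs₀⟩ := cubic_has_root Q hQ3
  have hdet0 : Matrix.det (s₀ • A₀ + B₀) = 0 := by rw [← hQeval s₀]; exact hs₀
  have htr0 : (Matrix.trace ((s₀ • A₀ + B₀) * (s₀ • A₀ + B₀))) ^ 3 = 0 := by
    rw [hkey s₀, hdet0]; ring
  have hpos : 0 < Matrix.trace ((s₀ • A₀ + B₀) * (s₀ • A₀ + B₀)) := by
    refine trace_sq_pos _ ?_ (hmne s₀)
    rw [Matrix.transpose_add, Matrix.transpose_smul, hsA₀, hsB₀]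
  have := pow_eq_zero_iff (n := 3) (by norm_num) |>.mp htr0
  rw [this] at hpos
  exact lt_irrefl _ hpos
end

section
/- Let F be a linear subspace of the real symmetric 3×3 matrices which contains the identity matrix and is closed under the symmetrized product (a,b) ↦ (a·b + b·a)/2. Then the dimension of F is 1, 2, 3, 4 or 6; in particular dim F ≠ 5. -/
open Matrix Module

section Aux

local notation "M3" => Matrix (Fin 3) (Fin 3) ℝ

/-- entry evaluation as a linear map -/
private def entryLM (i j : Fin 3) : M3 →ₗ[ℝ] ℝ where
  toFun a := a i j
  map_add' _ _ := rfl
  map_smul' _ _ := rfl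

/-- symmetric matrices anticommuting with `q` -/
private def K (q : M3) : Submodule ℝ M3 where
  carrier := {a | aᵀ = a ∧ q * a + a * q = 0}
  add_mem' := by
    rintro a b ⟨ha1, ha2⟩ ⟨hb1, hb2⟩
    refine ⟨by rw [transpose_add, ha1, hb1], ?_⟩
    have : q * (a + b) + (a + b) * q = (q * a + a * q) + (q * b + b * q) := by noncomm_ring
    rw [this, ha2, hb2, add_zero]
  zero_mem' := ⟨by simp, by simp⟩
  smul_mem' := by
    rintro c a ⟨ha1, ha2⟩
    refine ⟨by rw [transpose_smul, ha1], ?_⟩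
    have : q * (c • a) + (c • a) * q = c • (q * a + a * q) := by
      rw [mul_smul_comm, smul_mul_assoc, smul_add]
    rw [this, ha2, smul_zero]

private lemma K_mem (q a : M3) : a ∈ K q ↔ aᵀ = a ∧ q * a + a * q = 0 := Iff.rfl

private lemma finrank_K_le_three (W : Submodule ℝ M3) (p₁ p₂ p₃ : Fin 3 × Fin 3)
    (h : ∀ a : M3, a ∈ W → a p₁.1 p₁.2 = 0 → a p₂.1 p₂.2 = 0 → a p₃.1 p₃.2 = 0 → a = 0) :
    finrank ℝ W ≤ 3 := by
  set f : ↥W →ₗ[ℝ] (Fin 3 → ℝ) :=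
    (LinearMap.pi fun k : Fin 3 =>
      entryLM ((![p₁, p₂, p₃] k).1) ((![p₁, p₂, p₃] k).2)).comp W.subtype with hf
  have hinj : Function.Injective f := by
    rw [← LinearMap.ker_eq_bot, LinearMap.ker_eq_bot']
    intro x hx
    exact Subtype.ext (h x.1 x.2 (congrFun hx 0) (congrFun hx 1) (congrFun hx 2))
  simpa using LinearMap.finrank_le_finrank_of_injective hinj

private lemma sym_eq_zero {a : M3} (hs : aᵀ = a) (h00 : a 0 0 = 0) (h01 : a 0 1 = 0)
    (h02 : a 0 2 = 0) (h11 : a 1 1 = 0) (h12 : a 1 2 = 0) (h22 : a 2 2 = 0) : a = 0 := by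
  have hsym : ∀ i j : Fin 3, a j i = a i j := fun i j => congrFun (congrFun hs i) j
  have h10 : a 1 0 = 0 := (hsym 0 1).trans h01
  have h20 : a 2 0 = 0 := (hsym 0 2).trans h02
  have h21 : a 2 1 = 0 := (hsym 1 2).trans h12
  ext i j
  fin_cases i <;> fin_cases j <;> simp only [Matrix.zero_apply] <;> assumption

private lemma K_diagonal_le (d : Fin 3 → ℝ) (hd : d ≠ 0) :
    finrank ℝ (K (diagonal d)) ≤ 3 := by
  have key : ∀ a ∈ K (diagonal d), ∀ i j : Fin 3, d i + d j ≠ 0 → a i j = 0 := by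
    intro a ha i j hij
    have h := congrFun (congrFun ha.2 i) j
    simp only [Matrix.add_apply, Matrix.diagonal_mul, Matrix.mul_diagonal,
      Matrix.zero_apply] at h
    have h2 : (d i + d j) * a i j = 0 := by linarith [h, mul_comm (a i j) (d j)]
    exact (mul_eq_zero.mp h2).resolve_left hij
  by_cases h0 : d 0 = 0 <;> by_cases h1 : d 1 = 0 <;> by_cases h2 : d 2 = 0
  · exact absurd (funext fun i => by fin_cases i <;> simpa) hd
  · refine finrank_K_le_three _ (0,0) (1,1) (0,1) ?_
    intro a ha e1 e2 e3
    exact sym_eq_zero ha.1 e1 e3 (key a ha 0 2 fun hz => h2 (by linarith)) e2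
      (key a ha 1 2 fun hz => h2 (by linarith)) (key a ha 2 2 fun hz => h2 (by linarith))
  · refine finrank_K_le_three _ (0,0) (2,2) (0,2) ?_
    intro a ha e1 e2 e3
    exact sym_eq_zero ha.1 e1 (key a ha 0 1 fun hz => h1 (by linarith)) e3
      (key a ha 1 1 fun hz => h1 (by linarith)) (key a ha 1 2 fun hz => h1 (by linarith)) e2
  · refine finrank_K_le_three _ (0,0) (1,2) (1,2) ?_
    intro a ha e1 e2 _
    exact sym_eq_zero ha.1 e1 (key a ha 0 1 fun hz => h1 (by linarith))
      (key a ha 0 2 fun hz => h2 (by linarith)) (key a ha 1 1 fun hz => h1 (by linarith)) e2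
      (key a ha 2 2 fun hz => h2 (by linarith))
  · refine finrank_K_le_three _ (1,1) (2,2) (1,2) ?_
    intro a ha e1 e2 e3
    exact sym_eq_zero ha.1 (key a ha 0 0 fun hz => h0 (by linarith))
      (key a ha 0 1 fun hz => h0 (by linarith)) (key a ha 0 2 fun hz => h0 (by linarith))
      e1 e3 e2
  · refine finrank_K_le_three _ (1,1) (0,2) (0,2) ?_
    intro a ha e1 e2 _
    exact sym_eq_zero ha.1 (key a ha 0 0 fun hz => h0 (by linarith))
      (key a ha 0 1 fun hz => h0 (by linarith)) e2 e1
      (key a ha 1 2 fun hz => h2 (by linarith)) (key a ha 2 2 fun hz => h2 (by linarith))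
  · refine finrank_K_le_three _ (2,2) (0,1) (0,1) ?_
    intro a ha e1 e2 _
    exact sym_eq_zero ha.1 (key a ha 0 0 fun hz => h0 (by linarith)) e2
      (key a ha 0 2 fun hz => h0 (by linarith)) (key a ha 1 1 fun hz => h1 (by linarith))
      (key a ha 1 2 fun hz => h1 (by linarith)) e1
  · refine finrank_K_le_three _ (0,1) (0,2) (1,2) ?_
    intro a ha e1 e2 e3
    exact sym_eq_zero ha.1 (key a ha 0 0 fun hz => h0 (by linarith)) e1 e2
      (key a ha 1 1 fun hz => h1 (by linarith)) e3
      (key a ha 2 2 fun hz => h2 (by linarith))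

private lemma K_le_three (q : M3) (hq : qᵀ = q) (hq0 : q ≠ 0) : finrank ℝ (K q) ≤ 3 := by
  have hherm : q.IsHermitian := by
    rw [Matrix.IsHermitian, conjTranspose_eq_transpose_of_trivial, hq]
  set d : Fin 3 → ℝ := hherm.eigenvalues with hd
  set U : M3 := (hherm.eigenvectorUnitary : M3) with hU
  have hspec : q = U * diagonal d * star U := by
    have := hherm.spectral_theorem
    simpa using this
  have h1 : star U * U = 1 := mem_unitaryGroup_iff'.mp hherm.eigenvectorUnitary.2
  have h2 : U * star U = 1 := mem_unitaryGroup_iff.mp hherm.eigenvectorUnitary.2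
  have hdne : d ≠ 0 := by
    intro h
    apply hq0
    have hd0 : (diagonal (0 : Fin 3 → ℝ) : M3) = 0 := by
      ext i j; simp [diagonal]
    rw [hspec, h, hd0, mul_zero, zero_mul]
  have hstar : star U = Uᵀ := by
    rw [Matrix.star_eq_conjTranspose, conjTranspose_eq_transpose_of_trivial]
  have hmul : ∀ x y : M3, (star U * x * U) * (star U * y * U) = star U * (x * y) * U := by
    intro x y
    simp only [← mul_assoc]
    rw [mul_assoc (star U * x), h2, mul_one]
  have hback : ∀ c : M3, U * (star U * c * U) * star U = c := by
    intro c
    simp only [← mul_assoc]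
    rw [h2, one_mul, mul_assoc, h2, mul_one]
  set g : M3 →ₗ[ℝ] M3 :=
    { toFun := fun a => star U * a * U
      map_add' := fun a b => by noncomm_ring
      map_smul' := fun c a => by simp [mul_smul_comm, smul_mul_assoc] } with hg
  have hmem : ∀ x ∈ K q, g x ∈ K (diagonal d) := by
    intro a ha
    rw [K_mem] at ha ⊢
    constructor
    · show (star U * a * U)ᵀ = star U * a * U
      rw [hstar, transpose_mul, transpose_mul, transpose_transpose, ha.1, mul_assoc]
    · have hD : diagonal d = star U * q * U := by
        rw [hspec]
        simp only [← mul_assoc]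
        rw [h1, one_mul, mul_assoc, h1, mul_one]
      show diagonal d * (star U * a * U) + (star U * a * U) * diagonal d = 0
      rw [hD, hmul, hmul, ← add_mul, ← mul_add, ha.2, mul_zero, zero_mul]
  have hginj : Function.Injective g := by
    intro a b hab
    have hab' : star U * a * U = star U * b * U := hab
    calc a = U * (star U * a * U) * star U := (hback a).symm
      _ = U * (star U * b * U) * star U := by rw [hab']
      _ = b := hback b
  have hinj2 : Function.Injective (g.restrict hmem) := by
    intro x y hxy
    exact Subtype.ext (hginj (congrArg Subtype.val hxy))
  exact le_trans (LinearMap.finrank_le_finrank_of_injective hinj2) (K_diagonal_le d hdne)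

/-- the symmetric matrices -/
private def SymS : Submodule ℝ M3 where
  carrier := {m | mᵀ = m}
  add_mem' := by
    intro a b ha hb
    simp only [Set.mem_setOf_eq] at *
    rw [transpose_add, ha, hb]
  zero_mem' := by simp
  smul_mem' := by
    intro c a ha
    simp only [Set.mem_setOf_eq] at *
    rw [transpose_smul, ha]

private def idx6 : Fin 6 → Fin 3 × Fin 3 := ![(0,0),(1,1),(2,2),(0,1),(0,2),(1,2)]

private noncomputable def symCoord : M3 →ₗ[ℝ] (Fin 6 → ℝ) :=
  LinearMap.pi fun k => entryLM (idx6 k).1 (idx6 k).2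

private lemma finrank_SymS : finrank ℝ SymS = 6 := by
  have hbij : Function.Bijective (symCoord.domRestrict SymS) := by
    constructor
    · rw [← LinearMap.ker_eq_bot, LinearMap.ker_eq_bot']
      intro x hx
      exact Subtype.ext (sym_eq_zero x.2 (congrFun hx 0) (congrFun hx 3) (congrFun hx 4)
        (congrFun hx 1) (congrFun hx 5) (congrFun hx 2))
    · intro v
      refine ⟨⟨!![v 0, v 3, v 4; v 3, v 1, v 5; v 4, v 5, v 2], ?_⟩, ?_⟩
      · show _ᵀ = _
        ext i j
        fin_cases i <;> fin_cases j <;> rfl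
      · funext k
        fin_cases k <;> rfl
  have := LinearEquiv.finrank_eq (LinearEquiv.ofBijective _ hbij)
  simpa using this

/-- the trace pairing -/
private noncomputable def bil : M3 →ₗ[ℝ] M3 →ₗ[ℝ] ℝ :=
  LinearMap.mk₂ ℝ (fun a b => trace (a * b))
    (fun a a' b => by simp [add_mul])
    (fun c a b => by simp [smul_mul_assoc])
    (fun a b b' => by simp [mul_add])
    (fun c a b => by simp [mul_smul_comm])

private lemma sym_trace_sq_eq_zero {r : M3} (hr : rᵀ = r) (h : trace (r * r) = 0) :
    r = 0 := by
  have hsym : ∀ i j : Fin 3, r j i = r i j := fun i j => congrFun (congrFun hr i) j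
  have hexp : trace (r * r) = ∑ i : Fin 3, ∑ j : Fin 3, r i j * r i j := by
    simp only [Matrix.trace, Matrix.diag, Matrix.mul_apply]
    exact Finset.sum_congr rfl fun i _ => Finset.sum_congr rfl fun j _ => by rw [hsym i j]
  rw [hexp] at h
  ext i j
  have hz := (Finset.sum_eq_zero_iff_of_nonneg
    (fun i _ => Finset.sum_nonneg fun j _ => mul_self_nonneg (r i j))).mp h i
    (Finset.mem_univ i)
  have hz2 := (Finset.sum_eq_zero_iff_of_nonneg
    (fun j _ => mul_self_nonneg (r i j))).mp hz j (Finset.mem_univ j)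
  simpa using mul_self_eq_zero.mp hz2

private lemma finrank_ne_five (F : Submodule ℝ M3)
    (hsym : ∀ m ∈ F, mᵀ = m)
    (hone : (1 : M3) ∈ F)
    (hprod : ∀ a ∈ F, ∀ b ∈ F, ((1 : ℝ) / 2) • (a * b + b * a) ∈ F)
    (h5 : finrank ℝ F = 5) : False := by
  have hFS : F ≤ SymS := fun m hm => hsym m hm
  -- the pairing against symmetric matrices, valued in the dual of F
  set Φ : ↥SymS →ₗ[ℝ] Module.Dual ℝ ↥F := (bil.comp SymS.subtype).compl₂ F.subtype with hΦ
  have hrank := LinearMap.finrank_range_add_finrank_ker Φ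
  rw [finrank_SymS] at hrank
  have hdual : finrank ℝ (Module.Dual ℝ ↥F) = 5 := by
    rw [Subspace.dual_finrank_eq, h5]
  have hker : 1 ≤ finrank ℝ (LinearMap.ker Φ) := by
    have := Submodule.finrank_le (LinearMap.range Φ)
    rw [hdual] at this
    omega
  -- pick a nonzero symmetric matrix orthogonal to F
  have : Nontrivial (LinearMap.ker Φ) := by
    apply (Module.finrank_pos_iff (R := ℝ)).mp
    omega
  obtain ⟨x, hx⟩ := exists_ne (0 : LinearMap.ker Φ)
  set q : M3 := (x.1 : M3) with hqdef
  have hq : qᵀ = q := x.1.2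
  have hq0 : q ≠ 0 := by
    intro h
    exact hx (Subtype.ext (Subtype.ext h))
  have hqF : ∀ a ∈ F, trace (q * a) = 0 := by
    intro a ha
    exact LinearMap.congr_fun (LinearMap.mem_ker.mp x.2) ⟨a, ha⟩
  -- the orthogonal complement of F
  set G : Submodule ℝ M3 := SymS ⊓
    { carrier := {r | ∀ a ∈ F, trace (r * a) = 0}
      add_mem' := fun hr hs a ha => by
        rw [add_mul, trace_add, hr a ha, hs a ha, add_zero]
      zero_mem' := fun a ha => by rw [zero_mul, trace_zero]
      smul_mem' := fun c r hr a ha => by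
        rw [smul_mul_assoc, trace_smul, hr a ha, smul_zero] } with hGdef
  have hqG : q ∈ G := ⟨x.1.2, fun a ha => hqF a ha⟩
  -- the Jordan product of q with an element of F is again orthogonal to F
  have hprodG : ∀ a ∈ F, q * a + a * q ∈ G := by
    intro a ha
    refine ⟨?_, ?_⟩
    · show (q * a + a * q)ᵀ = q * a + a * q
      rw [transpose_add, transpose_mul, transpose_mul, hq, hsym a ha, add_comm]
    · intro b hb
      show trace ((q * a + a * q) * b) = 0
      have hm := hprod a ha b hb
      have ht := hqF _ hm
      have e1 : trace ((q * a + a * q) * b) = trace (q * (a * b)) + trace (q * (b * a)) := by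
        rw [add_mul, trace_add, mul_assoc]
        congr 1
        rw [trace_mul_comm, ← mul_assoc, trace_mul_comm]
      have e2 : trace (q * ((1 / 2 : ℝ) • (a * b + b * a))) =
          (1 / 2 : ℝ) * (trace (q * (a * b)) + trace (q * (b * a))) := by
        rw [mul_smul_comm, trace_smul, mul_add, trace_add]
        rfl
      rw [e2] at ht
      rw [e1]
      linarith
  -- `G` has dimension exactly one and equals the span of `q`
  have hGF : G ⊓ F = ⊥ := by
    rw [eq_bot_iff]
    rintro r ⟨⟨hr1, hr2⟩, hrF⟩
    have hz : r = 0 := sym_trace_sq_eq_zero hr1 (hr2 r hrF)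
    simp [hz]
  have hG1 : finrank ℝ G ≤ 1 := by
    by_contra hc
    push_neg at hc
    have hsum := Submodule.finrank_sup_add_finrank_inf_eq G F
    rw [hGF, finrank_bot] at hsum
    have hle : G ⊔ F ≤ SymS := sup_le inf_le_left hFS
    have := Submodule.finrank_mono hle
    rw [finrank_SymS] at this
    omega
  have hspan : (ℝ ∙ q) ≤ G := by
    rw [Submodule.span_singleton_le_iff_mem]
    exact hqG
  have hGq : (ℝ ∙ q) = G := by
    apply Submodule.eq_of_le_of_finrank_le hspan
    rw [finrank_span_singleton hq0]
    exact hG1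
  -- the multiplication-by-q operator
  set L : M3 →ₗ[ℝ] M3 := LinearMap.mulLeft ℝ q + LinearMap.mulRight ℝ q with hL
  set L' : ↥F →ₗ[ℝ] M3 := L.domRestrict F with hL'
  have hrange : LinearMap.range L' ≤ (ℝ ∙ q) := by
    rintro _ ⟨a, rfl⟩
    rw [hGq]
    exact hprodG a.1 a.2
  have hr1 : finrank ℝ (LinearMap.range L') ≤ 1 := by
    have := Submodule.finrank_mono hrange
    rwa [finrank_span_singleton hq0] at this
  have hkerL : 4 ≤ finrank ℝ (LinearMap.ker L') := by
    have := LinearMap.finrank_range_add_finrank_ker L'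
    rw [h5] at this
    omega
  -- the kernel embeds into the symmetric matrices anticommuting with q
  have hm : ∀ y : ↥(LinearMap.ker L'),
      (F.subtype.comp (LinearMap.ker L').subtype) y ∈ K q := by
    intro y
    refine ⟨hsym y.1.1 y.1.2, ?_⟩
    have := LinearMap.mem_ker.mp y.2
    exact this
  have hinjK : Function.Injective
      (LinearMap.codRestrict (K q) (F.subtype.comp (LinearMap.ker L').subtype) hm) := by
    intro x y hxy
    have h' := congrArg Subtype.val hxy
    simp only [LinearMap.codRestrict_apply] at h'
    exact Subtype.ext (Subtype.ext h')
  have h43 : (4 : ℕ) ≤ 3 := by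
    calc (4 : ℕ) ≤ finrank ℝ (LinearMap.ker L') := hkerL
      _ ≤ finrank ℝ (K q) := LinearMap.finrank_le_finrank_of_injective hinjK
      _ ≤ 3 := K_le_three q hq hq0
  omega

end Aux

/-- A linear subspace `F` of the real symmetric `3 × 3` matrices which
contains the identity and is closed under the symmetrized product
`(a, b) ↦ (a·b + b·a)/2` has dimension 1, 2, 3, 4 or 6. -/
theorem dim_of_symmetrized_product_closed_subspace
    (F : Submodule ℝ (Matrix (Fin 3) (Fin 3) ℝ))
    (hsym : ∀ m ∈ F, mᵀ = m)
    (hone : (1 : Matrix (Fin 3) (Fin 3) ℝ) ∈ F)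
    (hprod : ∀ a ∈ F, ∀ b ∈ F, ((1 : ℝ) / 2) • (a * b + b * a) ∈ F) :
    Module.finrank ℝ F = 1 ∨ Module.finrank ℝ F = 2 ∨ Module.finrank ℝ F = 3 ∨
      Module.finrank ℝ F = 4 ∨ Module.finrank ℝ F = 6 := by
  have hFS : F ≤ SymS := fun m hm => hsym m hm
  have h6 : finrank ℝ F ≤ 6 := by
    have := Submodule.finrank_mono hFS
    rwa [finrank_SymS] at this
  have h0 : 0 < finrank ℝ F := by
    apply Module.finrank_pos_iff.mpr
    exact ⟨⟨⟨1, hone⟩, 0, fun h => one_ne_zero (congrArg Subtype.val h)⟩⟩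
  have h5 : finrank ℝ F ≠ 5 := fun h => finrank_ne_five F hsym hone hprod h
  omega
end

section
/- A real symmetric 3×3 matrix a has a repeated eigenvalue (i.e. is at least transversely isotropic) if and only if the generalized cross product a × a² vanishes, that is, if and only if det of the 3×3 matrix with columns x, a·x, a²·x is zero for every x ∈ ℝ³. -/
open Matrix

/-- Determinant of the `3 × 3` matrix with columns `u`, `v`, `w`. -/
def det3 (u v w : Fin 3 → ℝ) : ℝ := (Matrix.of fun i j => ![u, v, w] j i).det

lemma det3_lin (u v : Fin 3 → ℝ) (c d : ℝ) :
    det3 u v (c • v - d • u) = 0 := by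
  simp [det3, Matrix.det_fin_three]
  ring

lemma fin3_cases (m : Fin 3) : m = 0 ∨ m = 1 ∨ m = 2 := by omega

lemma exists_quad (f : Fin 3 → ℝ) (i j : Fin 3) (hij : i ≠ j) (h : f i = f j) :
    ∃ α β : ℝ, ∀ m : Fin 3, f m ^ 2 = (α + β) * f m - α * β := by
  have key : ∀ α β : ℝ, (∀ m : Fin 3, f m = α ∨ f m = β) →
      ∀ m : Fin 3, f m ^ 2 = (α + β) * f m - α * β := by
    intro α β hab m
    rcases hab m with h' | h' <;> rw [h'] <;> ring
  fin_cases i <;> fin_cases j <;> simp_all <;>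
    [exact ⟨f 0, f 2, key _ _ (fun m => by rcases fin3_cases m with rfl | rfl | rfl <;> simp [h])⟩;
     exact ⟨f 0, f 1, key _ _ (fun m => by rcases fin3_cases m with rfl | rfl | rfl <;> simp [h])⟩;
     exact ⟨f 1, f 2, key _ _ (fun m => by rcases fin3_cases m with rfl | rfl | rfl <;> simp [h])⟩;
     exact ⟨f 1, f 0, key _ _ (fun m => by rcases fin3_cases m with rfl | rfl | rfl <;> simp [h])⟩;
     exact ⟨f 2, f 1, key _ _ (fun m => by rcases fin3_cases m with rfl | rfl | rfl <;> simp [h])⟩;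
     exact ⟨f 2, f 0, key _ _ (fun m => by rcases fin3_cases m with rfl | rfl | rfl <;> simp [h])⟩]

lemma sq_eq_of_quad (a : Matrix (Fin 3) (Fin 3) ℝ) (ha : a.IsHermitian)
    (α β : ℝ) (hq : ∀ m : Fin 3, ha.eigenvalues m ^ 2 = (α + β) * ha.eigenvalues m - α * β) :
    a * a = (α + β) • a - (α * β) • 1 := by
  set U : Matrix (Fin 3) (Fin 3) ℝ := (ha.eigenvectorUnitary : Matrix (Fin 3) (Fin 3) ℝ) with hUdef
  set D : Matrix (Fin 3) (Fin 3) ℝ := diagonal (RCLike.ofReal ∘ ha.eigenvalues) with hDdef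
  have hU : star U * U = 1 := Unitary.coe_star_mul_self ha.eigenvectorUnitary
  have hU' : U * star U = 1 := Unitary.coe_mul_star_self ha.eigenvectorUnitary
  have hspec : a = U * D * star U := ha.spectral_theorem
  have hDD : D * D = (α + β) • D - (α * β) • 1 := by
    rw [hDdef, diagonal_mul_diagonal]
    ext m k
    by_cases hmk : m = k
    · subst hmk
      simp only [Matrix.diagonal_apply_eq, Function.comp_apply, RCLike.ofReal_real_eq_id, id_eq,
        Matrix.sub_apply, Matrix.smul_apply, Matrix.one_apply_eq, smul_eq_mul, mul_one]
      linear_combination hq m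
    · simp [Matrix.diagonal_apply_ne _ hmk, Matrix.one_apply_ne hmk]
  calc a * a = (U * D * star U) * (U * D * star U) := by rw [← hspec]
    _ = U * (D * D) * star U := by
        rw [Matrix.mul_assoc, Matrix.mul_assoc, ← Matrix.mul_assoc (star U),
          ← Matrix.mul_assoc (star U), hU, Matrix.one_mul, ← Matrix.mul_assoc,
          ← Matrix.mul_assoc, Matrix.mul_assoc U D D]
    _ = (α + β) • a - (α * β) • 1 := by
        rw [hDD, Matrix.mul_sub, Matrix.sub_mul, Matrix.mul_smul, Matrix.smul_mul,
          Matrix.mul_smul, Matrix.smul_mul, Matrix.mul_one, hU', ← hspec]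

/-- A real symmetric `3 × 3` matrix `a` has a repeated eigenvalue
(is at least transversely isotropic) iff the generalized cross product `a × a²` vanishes,
i.e. iff `det(x, a·x, a²·x) = 0` for every `x ∈ ℝ³`. -/
theorem repeated_eigenvalue_iff_cross_product_self_sq_eq_zero
    (a : Matrix (Fin 3) (Fin 3) ℝ) (ha : a.IsHermitian) :
    (∃ i j : Fin 3, i ≠ j ∧ ha.eigenvalues i = ha.eigenvalues j) ↔
      ∀ x : Fin 3 → ℝ, det3 x (a.mulVec x) ((a * a).mulVec x) = 0 := by
  constructor
  · rintro ⟨i, j, hij, hev⟩ x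
    obtain ⟨α, β, hq⟩ := exists_quad ha.eigenvalues i j hij hev
    have hsq := sq_eq_of_quad a ha α β hq
    have : (a * a).mulVec x = (α + β) • a.mulVec x - (α * β) • x := by
      rw [hsq, Matrix.sub_mulVec, Matrix.smul_mulVec, Matrix.smul_mulVec,
        Matrix.one_mulVec]
    rw [this]
    exact det3_lin x (a.mulVec x) (α + β) (α * β)
  · intro hdet
    by_contra hne
    push_neg at hne
    set U : Matrix (Fin 3) (Fin 3) ℝ := (ha.eigenvectorUnitary : Matrix (Fin 3) (Fin 3) ℝ) with hUdef
    set D : Matrix (Fin 3) (Fin 3) ℝ := diagonal (RCLike.ofReal ∘ ha.eigenvalues) with hDdef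
    have hU : star U * U = 1 := Unitary.coe_star_mul_self ha.eigenvectorUnitary
    have hspec : a = U * D * star U := ha.spectral_theorem
    set c : Fin 3 → ℝ := fun _ => 1 with hc
    set x : Fin 3 → ℝ := U.mulVec c with hx
    have haU : a * U = U * D := by
      rw [hspec, Matrix.mul_assoc, hU, Matrix.mul_one]
    have h1 : a.mulVec x = (U * D).mulVec c := by
      rw [hx, Matrix.mulVec_mulVec, haU]
    have h2 : (a * a).mulVec x = (U * (D * D)).mulVec c := by
      rw [hx, Matrix.mulVec_mulVec, Matrix.mul_assoc, haU, ← Matrix.mul_assoc, haU,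
        Matrix.mul_assoc]
    have hN : (Matrix.of fun i k => ![x, a.mulVec x, (a * a).mulVec x] k i)
        = U * Matrix.vandermonde ha.eigenvalues := by
      ext i k
      rw [h1, h2]
      fin_cases k <;>
        simp [h1, h2, hx, hc, hDdef, Matrix.mulVec, dotProduct, Matrix.mul_apply,
          Matrix.vandermonde, Matrix.diagonal, Fin.sum_univ_three] <;> ring
    have hdetU : U.det ≠ 0 := by
      intro h0
      have := congrArg Matrix.det hU
      rw [Matrix.det_mul, Matrix.det_one, Matrix.star_eq_conjTranspose,
        Matrix.det_conjTranspose, h0] at this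
      simp at this
    have hdetV : (Matrix.vandermonde ha.eigenvalues).det ≠ 0 := by
      rw [Matrix.det_vandermonde]
      refine Finset.prod_ne_zero_iff.mpr fun i _ => Finset.prod_ne_zero_iff.mpr fun j hj => ?_
      rw [Finset.mem_Ioi] at hj
      exact sub_ne_zero_of_ne (hne j i (ne_of_gt hj))
    have := hdet x
    rw [det3, hN, Matrix.det_mul] at this
    exact (mul_ne_zero hdetU hdetV) this
end

section
/- Let a be a real symmetric 3×3 matrix with exactly two distinct eigenvalues (transversely isotropic) and let b be any real symmetric 3×3 matrix. Then the pair (a,b) is transversely isotropic — i.e. there exists a unit vector n ∈ ℝ³ such that every g ∈ SO(3) with g·n = n satisfies g a gᵀ = a and g b gᵀ = b — if and only if a × b = 0, that is, det of the matrix with columns x, a·x, b·x vanishes for every x ∈ ℝ³. -/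
open Matrix

/-- The rotation group `SO(3)` as a set of real `3 × 3` matrices. -/
def SO3 : Set (Matrix (Fin 3) (Fin 3) ℝ) := {g | g * gᵀ = 1 ∧ g.det = 1}

def Pm (n : Fin 3 → ℝ) : Matrix (Fin 3) (Fin 3) ℝ := Matrix.of fun i j => n i * n j
def Km (n : Fin 3 → ℝ) : Matrix (Fin 3) (Fin 3) ℝ := !![0, -n 2, n 1; n 2, 0, -n 0; -n 1, n 0, 0]

lemma PP (n : Fin 3 → ℝ) (hn : (∑ i, n i ^ 2) = 1) : Pm n * Pm n = Pm n := by
  rw [Fin.sum_univ_three] at hn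
  ext i j
  simp [Pm, Matrix.mul_apply, Fin.sum_univ_three]
  linear_combination (n i * n j) * hn

lemma KP (n : Fin 3 → ℝ) : Km n * Pm n = 0 := by
  ext i j
  fin_cases i <;> fin_cases j <;>
    simp [Pm, Km, Matrix.mul_apply, Fin.sum_univ_three] <;> ring

lemma PK (n : Fin 3 → ℝ) : Pm n * Km n = 0 := by
  ext i j
  fin_cases i <;> fin_cases j <;>
    simp [Pm, Km, Matrix.mul_apply, Fin.sum_univ_three] <;> ring

lemma KK (n : Fin 3 → ℝ) (hn : (∑ i, n i ^ 2) = 1) : Km n * Km n = Pm n - 1 := by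
  rw [Fin.sum_univ_three] at hn
  ext i j
  fin_cases i <;> fin_cases j <;>
    simp [Pm, Km, Matrix.mul_apply, Fin.sum_univ_three] <;> linarith

lemma Kt (n : Fin 3 → ℝ) : (Km n)ᵀ = - Km n := by
  ext i j
  fin_cases i <;> fin_cases j <;> simp [Km]

lemma Pt (n : Fin 3 → ℝ) : (Pm n)ᵀ = Pm n := by
  ext i j; simp [Pm, mul_comm]

lemma Pmv (n v : Fin 3 → ℝ) : (Pm n).mulVec v = (n ⬝ᵥ v) • n := by
  funext i
  simp [Pm, Matrix.mulVec, dotProduct, Fin.sum_univ_three]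
  ring

lemma Kn (n : Fin 3 → ℝ) : (Km n).mulVec n = 0 := by
  funext i
  fin_cases i <;> simp [Km, Matrix.mulVec, dotProduct, Fin.sum_univ_three] <;> ring

lemma F4 (n : Fin 3 → ℝ) (B : Matrix (Fin 3) (Fin 3) ℝ) (hn : (∑ i, n i ^ 2) = 1)
    (hB : Bᵀ = B) (hBn : B.mulVec n = 0) :
    B - Km n * B * Km n = (B 0 0 + B 1 1 + B 2 2) • (1 - Pm n) := by
  rw [Fin.sum_univ_three] at hn
  have h0 := congrFun hBn 0
  have h1 := congrFun hBn 1
  have h2 := congrFun hBn 2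
  simp [Matrix.mulVec, dotProduct, Fin.sum_univ_three] at h0 h1 h2
  have hs10 : B 1 0 = B 0 1 := by simpa using congrFun (congrFun hB 0) 1
  have hs20 : B 2 0 = B 0 2 := by simpa using congrFun (congrFun hB 0) 2
  have hs21 : B 2 1 = B 1 2 := by simpa using congrFun (congrFun hB 1) 2
  rw [hs10] at h1; rw [hs20, hs21] at h2
  ext i j
  simp only [Matrix.sub_apply, Matrix.smul_apply, Matrix.mul_apply, Matrix.one_apply,
    Fin.sum_univ_three, Pm, Km, Matrix.of_apply, smul_eq_mul]
  fin_cases i <;> fin_cases j <;>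
    (simp <;> simp only [hs10, hs20, hs21]) <;>
    first
    | linear_combination n 0 * h0 - n 1 * h1 - n 2 * h2 + (B 1 1 + B 2 2) * hn
    | linear_combination n 1 * h0 + n 0 * h1 - B 0 1 * hn
    | linear_combination n 2 * h0 + n 0 * h2 - B 0 2 * hn
    | linear_combination -(n 0 * h0) + n 1 * h1 - n 2 * h2 + (B 0 0 + B 2 2) * hn
    | linear_combination n 2 * h1 + n 1 * h2 - B 1 2 * hn
    | linear_combination -(n 0 * h0) - n 1 * h1 + n 2 * h2 + (B 0 0 + B 1 1) * hn

lemma KPK (n : Fin 3 → ℝ) : Km n * Pm n * Km n = 0 := by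
  have : Km n * Pm n = 0 := by
    ext i j
    fin_cases i <;> fin_cases j <;>
      simp [Pm, Km, Matrix.mul_apply, Fin.sum_univ_three] <;> ring
  rw [this, zero_mul]

lemma hnn (n : Fin 3 → ℝ) (hn : (∑ i, n i ^ 2) = 1) : n ⬝ᵥ n = 1 := by
  rw [Fin.sum_univ_three] at hn
  simp [dotProduct, Fin.sum_univ_three]
  linear_combination hn

lemma structK (n : Fin 3 → ℝ) (m : Matrix (Fin 3) (Fin 3) ℝ) (κ : ℝ)
    (hn : (∑ i, n i ^ 2) = 1) (hm : mᵀ = m) (hκ : m.mulVec n = κ • n)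
    (hKmK : Km n * m * Km n = κ • Pm n - m) :
    ∃ β γ : ℝ, m = β • 1 + γ • Pm n := by
  set B := m - κ • Pm n with hBdef
  have hBt : Bᵀ = B := by rw [hBdef, transpose_sub, transpose_smul, Pt, hm]
  have hBn : B.mulVec n = 0 := by
    rw [hBdef, sub_mulVec, hκ, smul_mulVec, Pmv, hnn n hn, one_smul, sub_self]
  have hKB : Km n * B * Km n = -B := by
    rw [hBdef, mul_sub, sub_mul, Matrix.mul_smul, Matrix.smul_mul, KPK, smul_zero, hKmK]
    abel
  have h4 := F4 n B hn hBt hBn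
  rw [hKB, sub_neg_eq_add] at h4
  set c := B 0 0 + B 1 1 + B 2 2 with hc
  refine ⟨c / 2, κ - c / 2, ?_⟩
  have hmB : m = B + κ • Pm n := by rw [hBdef]; abel
  have hB2 : B = (c / 2) • (1 - Pm n) := by
    have h2B : (2:ℝ) • B = c • (1 - Pm n) := by rw [two_smul]; exact h4
    calc B = (2⁻¹ : ℝ) • ((2:ℝ) • B) := by rw [smul_smul]; norm_num
    _ = (2⁻¹:ℝ) • (c • (1 - Pm n)) := by rw [h2B]
    _ = (c/2) • (1 - Pm n) := by rw [smul_smul]; ring_nf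
  rw [hmB, hB2]
  module

lemma gfix (n : Fin 3 → ℝ) (g m : Matrix (Fin 3) (Fin 3) ℝ) (β γ : ℝ)
    (hg : g * gᵀ = 1) (hgn : g.mulVec n = n) (hm : m = β • 1 + γ • Pm n) :
    g * m * gᵀ = m := by
  have hgP : g * Pm n = Pm n := by
    ext i j
    have := congrFun hgn i
    simp [Matrix.mulVec, dotProduct, Fin.sum_univ_three] at this
    simp [Pm, Matrix.mul_apply, Fin.sum_univ_three]
    linear_combination (n j) * this
  have hPg : Pm n * gᵀ = Pm n := by
    ext i j
    have := congrFun hgn j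
    simp [Matrix.mulVec, dotProduct, Fin.sum_univ_three] at this
    simp [Pm, Matrix.mul_apply, Fin.sum_univ_three]
    linear_combination (n i) * this
  rw [hm]
  simp only [mul_add, add_mul, Matrix.mul_smul, Matrix.smul_mul, mul_one, hg, hgP, hPg]

lemma det3_eq (u v w : Fin 3 → ℝ) :
    det3 u v w = u 0 * (v 1 * w 2 - w 1 * v 2) - v 0 * (u 1 * w 2 - w 1 * u 2)
      + w 0 * (u 1 * v 2 - v 1 * u 2) := by
  simp [det3, Matrix.det_fin_three]
  ring

noncomputable def G1 (n : Fin 3 → ℝ) : Matrix (Fin 3) (Fin 3) ℝ := (2:ℝ) • Pm n - 1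
noncomputable def G2 (n : Fin 3 → ℝ) : Matrix (Fin 3) (Fin 3) ℝ := Pm n + Km n

lemma G1t (n : Fin 3 → ℝ) : (G1 n)ᵀ = G1 n := by
  simp [G1, transpose_sub, transpose_smul, Pt]

lemma G2t (n : Fin 3 → ℝ) : (G2 n)ᵀ = Pm n - Km n := by
  rw [G2, transpose_add, Pt, Kt, sub_eq_add_neg]

lemma G1mem (n : Fin 3 → ℝ) (hn : (∑ i, n i ^ 2) = 1) : G1 n ∈ SO3 := by
  constructor
  · rw [G1t, G1]
    simp only [sub_mul, mul_sub, Matrix.smul_mul, Matrix.mul_smul, one_mul, mul_one, PP n hn]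
    module
  · rw [Fin.sum_univ_three] at hn
    show (G1 n).det = 1
    simp [G1, Pm, Matrix.det_fin_three, Matrix.one_apply]
    linear_combination (2:ℝ) * hn

lemma G1n (n : Fin 3 → ℝ) (hn : (∑ i, n i ^ 2) = 1) : (G1 n).mulVec n = n := by
  rw [G1, sub_mulVec, smul_mulVec, Pmv, hnn n hn, one_smul, one_mulVec]
  module

lemma G2mem (n : Fin 3 → ℝ) (hn : (∑ i, n i ^ 2) = 1) : G2 n ∈ SO3 := by
  constructor
  · rw [G2t, G2]
    simp only [mul_sub, add_mul, PP n hn, PK, KP, KK n hn]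
    module
  · rw [Fin.sum_univ_three] at hn
    show (G2 n).det = 1
    simp only [Matrix.det_fin_three, G2, Matrix.add_apply]
    simp [Pm, Km]
    linear_combination (n 0 ^ 2 + n 1 ^ 2 + n 2 ^ 2 + 1) * hn

lemma G2n (n : Fin 3 → ℝ) (hn : (∑ i, n i ^ 2) = 1) : (G2 n).mulVec n = n := by
  rw [G2, add_mulVec, Pmv, hnn n hn, one_smul, Kn, add_zero]

lemma fwd (n : Fin 3 → ℝ) (m : Matrix (Fin 3) (Fin 3) ℝ) (hn : (∑ i, n i ^ 2) = 1)
    (hm : mᵀ = m) (H1 : G1 n * m * (G1 n)ᵀ = m) (H2 : G2 n * m * (G2 n)ᵀ = m) :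
    ∃ β γ : ℝ, m = β • 1 + γ • Pm n := by
  rw [G1t] at H1
  have hfix : (G1 n).mulVec (m.mulVec n) = m.mulVec n := by
    have h1 : (G1 n * m * G1 n).mulVec n = (G1 n).mulVec (m.mulVec ((G1 n).mulVec n)) := by
      rw [mulVec_mulVec, mulVec_mulVec]
    rw [G1n n hn] at h1
    rw [← h1, H1]
  have hv : m.mulVec n = (n ⬝ᵥ m.mulVec n) • n := by
    rw [G1, sub_mulVec, smul_mulVec, Pmv, one_mulVec] at hfix
    funext i
    have := congrFun hfix i
    simp [Pi.smul_apply, Pi.sub_apply, smul_eq_mul] at this ⊢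
    linarith
  set κ := n ⬝ᵥ m.mulVec n with hκdef
  have hmP : m * Pm n = κ • Pm n := by
    ext i j
    have := congrFun hv i
    simp [Matrix.mulVec, dotProduct, Fin.sum_univ_three] at this
    simp [Pm, Matrix.mul_apply, Fin.sum_univ_three]
    linear_combination (n j) * this
  have hPm : Pm n * m = κ • Pm n := by
    have h' := congrArg Matrix.transpose hmP
    rw [transpose_mul, Pt, hm, transpose_smul, Pt] at h'
    exact h'
  rw [G2t, G2] at H2
  have expand : (Pm n + Km n) * m * (Pm n - Km n) =
      Pm n * m * Pm n - Pm n * m * Km n + Km n * m * Pm n - Km n * m * Km n := by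
    noncomm_ring
  rw [expand] at H2
  rw [hPm, Matrix.smul_mul, Matrix.smul_mul, PP n hn, PK n, smul_zero,
    mul_assoc (Km n), hmP, Matrix.mul_smul, KP n, smul_zero] at H2
  obtain ⟨X, hX⟩ : ∃ X, X = Km n * m * Km n := ⟨_, rfl⟩
  rw [← hX] at H2
  have hKmK' : X = κ • Pm n - m := by rw [← H2]; abel
  rw [hX] at hKmK'
  exact structK n m κ hn hm hv hKmK'

lemma two_vals (f : Fin 3 → ℝ) (h : ({f 0, f 1, f 2} : Set ℝ).ncard = 2) :
    ∃ (i₀ : Fin 3) (lam mu : ℝ), mu ≠ lam ∧ f i₀ = mu ∧ ∀ j ≠ i₀, f j = lam := by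
  by_cases h01 : f 0 = f 1
  · by_cases h02 : f 0 = f 2
    · exfalso
      have : ({f 0, f 1, f 2} : Set ℝ) = {f 0} := by rw [← h01, ← h02]; simp
      rw [this, Set.ncard_singleton] at h; omega
    · exact ⟨2, f 0, f 2, fun hc => h02 hc.symm, rfl, by
        intro j hj; fin_cases j <;> simp_all⟩
  · by_cases h02 : f 0 = f 2
    · exact ⟨1, f 0, f 1, fun hc => h01 hc.symm, rfl, by
        intro j hj; fin_cases j <;> simp_all⟩
    · by_cases h12 : f 1 = f 2
      · exact ⟨0, f 1, f 0, h01, rfl, by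
          intro j hj; fin_cases j <;> simp_all⟩
      · exfalso
        have : ({f 0, f 1, f 2} : Set ℝ).ncard = 3 := by
          rw [Set.ncard_insert_of_notMem (by simp [h01, h02]) (Set.toFinite _),
            Set.ncard_insert_of_notMem (by simp [h12]) (Set.toFinite _),
            Set.ncard_singleton]
        omega

lemma spectral (a : Matrix (Fin 3) (Fin 3) ℝ) (ha : aᵀ = a)
    (h2 : (spectrum ℝ a).ncard = 2) :
    ∃ n : Fin 3 → ℝ, (∑ i, n i ^ 2) = 1 ∧ ∃ lam c : ℝ, c ≠ 0 ∧ a = lam • 1 + c • Pm n := by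
  have hA : a.IsHermitian := by
    rwa [Matrix.IsHermitian, conjTranspose_eq_transpose_of_trivial]
  have hspec := hA.spectral_theorem
  set f := hA.eigenvalues with hf
  set U : Matrix (Fin 3) (Fin 3) ℝ := ↑(hA.eigenvectorUnitary) with hU
  have hofReal : (RCLike.ofReal ∘ f : Fin 3 → ℝ) = f := by funext i; simp
  have hdiag : spectrum ℝ a = spectrum ℝ (diagonal f : Matrix (Fin 3) (Fin 3) ℝ) := by
    conv_lhs => rw [hspec, hofReal]
    exact spectrum.units_conjugate (u := Unitary.toUnits hA.eigenvectorUnitary)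
  have hrange : spectrum ℝ a = Set.range f := by
    apply Set.Subset.antisymm
    · intro x hx
      by_contra hxr
      rw [hdiag, spectrum.mem_iff] at hx
      apply hx
      rw [Matrix.algebraMap_eq_diagonal]
      have hd : (diagonal ((algebraMap ℝ (Fin 3 → ℝ)) x) - diagonal f :
          Matrix (Fin 3) (Fin 3) ℝ) = diagonal (fun i => x - f i) := by
        rw [diagonal_sub]; congr 1
      rw [hd, Matrix.isUnit_iff_isUnit_det, det_diagonal, isUnit_iff_ne_zero]
      apply Finset.prod_ne_zero_iff.mpr
      intro i _
      exact sub_ne_zero.mpr fun hc => hxr ⟨i, hc.symm⟩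
    · rintro x ⟨i, rfl⟩
      exact hA.eigenvalues_mem_spectrum_real i
  have hrange3 : Set.range f = {f 0, f 1, f 2} := by
    ext x
    constructor
    · rintro ⟨i, rfl⟩; fin_cases i <;> simp
    · intro hx
      rcases hx with h | h | h
      exacts [⟨0, h.symm⟩, ⟨1, h.symm⟩, ⟨2, h.symm⟩]
  rw [hrange, hrange3] at h2
  obtain ⟨i₀, lam, mu, hml, hfi, hall⟩ := two_vals f h2
  have hstar : (star U : Matrix (Fin 3) (Fin 3) ℝ) = Uᵀ := by
    rw [Matrix.star_eq_conjTranspose, conjTranspose_eq_transpose_of_trivial]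
  have hU1 : U * Uᵀ = 1 := by
    rw [← hstar]; exact (Matrix.mem_unitaryGroup_iff).mp (hA.eigenvectorUnitary).2
  have hU2 : Uᵀ * U = 1 := by
    rw [← hstar]; exact (Matrix.mem_unitaryGroup_iff').mp (hA.eigenvectorUnitary).2
  refine ⟨fun i => U i i₀, ?_, lam, mu - lam, sub_ne_zero.mpr hml, ?_⟩
  · have := congrFun (congrFun hU2 i₀) i₀
    simp only [Matrix.mul_apply, Fin.sum_univ_three, Matrix.transpose_apply,
      Matrix.one_apply_eq] at this
    rw [Fin.sum_univ_three]
    linear_combination this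
  · ext i j
    have hentry := congrFun (congrFun hspec i) j
    simp only [Unitary.conjStarAlgAut_apply, Unitary.coe_star] at hentry
    rw [← hU, hofReal, hstar] at hentry
    have hrw : (U * diagonal f * Uᵀ) i j = U i 0 * f 0 * U j 0 + U i 1 * f 1 * U j 1
        + U i 2 * f 2 * U j 2 := by
      simp [Matrix.mul_apply, Matrix.diagonal, Fin.sum_univ_three, Matrix.of_apply]
      try ring
    rw [hrw] at hentry
    have hUUij := congrFun (congrFun hU1 i) j
    simp only [Matrix.mul_apply, Fin.sum_univ_three, Matrix.transpose_apply] at hUUij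
    simp only [Matrix.add_apply, Matrix.smul_apply, smul_eq_mul, Pm, Matrix.of_apply]
    fin_cases i₀ <;>
      simp only [id_eq, Fin.zero_eta, Fin.mk_one, Fin.reduceFinMk] at hfi hall ⊢
    · have hf1 : f 1 = lam := hall 1 (by decide)
      have hf2 : f 2 = lam := hall 2 (by decide)
      linear_combination hentry + (U i 0 * U j 0) * hfi + (U i 1 * U j 1) * hf1
        + (U i 2 * U j 2) * hf2 + lam * hUUij
    · have hf1 : f 0 = lam := hall 0 (by decide)
      have hf2 : f 2 = lam := hall 2 (by decide)
      linear_combination hentry + (U i 1 * U j 1) * hfi + (U i 0 * U j 0) * hf1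
        + (U i 2 * U j 2) * hf2 + lam * hUUij
    · have hf1 : f 0 = lam := hall 0 (by decide)
      have hf2 : f 1 = lam := hall 1 (by decide)
      linear_combination hentry + (U i 2 * U j 2) * hfi + (U i 0 * U j 0) * hf1
        + (U i 1 * U j 1) * hf2 + lam * hUUij

lemma det3K (n y w : Fin 3 → ℝ) : det3 y n w = y ⬝ᵥ (Km n).mulVec w := by
  rw [det3_eq]
  simp [dotProduct, Matrix.mulVec, Km, Fin.sum_univ_three]
  ring

lemma bwd_q (n : Fin 3 → ℝ) (a b : Matrix (Fin 3) (Fin 3) ℝ) (hn : (∑ i, n i ^ 2) = 1)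
    (lam c : ℝ) (hc : c ≠ 0) (haS : a = lam • 1 + c • Pm n)
    (H : ∀ x, det3 x (a.mulVec x) (b.mulVec x) = 0) :
    ∀ y, det3 y n (b.mulVec y) = 0 := by
  have key : ∀ x, (n ⬝ᵥ x) * det3 x n (b.mulVec x) = 0 := by
    intro x
    have hax : a.mulVec x = lam • x + (c * (n ⬝ᵥ x)) • n := by
      rw [haS, add_mulVec, smul_mulVec, one_mulVec, smul_mulVec, Pmv, smul_smul]
    have hH := H x
    rw [hax] at hH
    have hexp : det3 x (lam • x + (c * (n ⬝ᵥ x)) • n) (b.mulVec x)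
        = c * ((n ⬝ᵥ x) * det3 x n (b.mulVec x)) := by
      rw [det3_eq, det3_eq]
      simp only [Pi.add_apply, Pi.smul_apply, smul_eq_mul]
      ring
    rw [hexp] at hH
    exact (mul_eq_zero.mp hH).resolve_left hc
  intro y
  have hy := key y
  have hyp := key (y + n)
  have hym := key (y - n)
  have hsp : n ⬝ᵥ (y + n) = n ⬝ᵥ y + 1 := by rw [dotProduct_add, hnn n hn]
  have hsm : n ⬝ᵥ (y - n) = n ⬝ᵥ y - 1 := by rw [dotProduct_sub, hnn n hn]
  have hbp : b.mulVec (y + n) = b.mulVec y + b.mulVec n := by rw [mulVec_add]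
  have hbm : b.mulVec (y - n) = b.mulVec y - b.mulVec n := by rw [mulVec_sub]
  rw [hsp, hbp] at hyp
  rw [hsm, hbm] at hym
  have hep : det3 (y + n) n (b.mulVec y + b.mulVec n)
      = det3 y n (b.mulVec y) + det3 y n (b.mulVec n) := by
    rw [det3_eq, det3_eq, det3_eq]
    simp only [Pi.add_apply]
    ring
  have hem : det3 (y - n) n (b.mulVec y - b.mulVec n)
      = det3 y n (b.mulVec y) - det3 y n (b.mulVec n) := by
    rw [det3_eq, det3_eq, det3_eq]
    simp only [Pi.sub_apply]
    ring
  rw [hep] at hyp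
  rw [hem] at hym
  have hr : det3 y n (b.mulVec n) = 0 := by linear_combination (hyp + hym - 2 * hy) / 2
  linear_combination hyp - hy - (n ⬝ᵥ y + 1) * hr

lemma bwd_struct (n : Fin 3 → ℝ) (b : Matrix (Fin 3) (Fin 3) ℝ) (hn : (∑ i, n i ^ 2) = 1)
    (hb : bᵀ = b) (hq : ∀ y, det3 y n (b.mulVec y) = 0) :
    ∃ β γ : ℝ, b = β • 1 + γ • Pm n := by
  have hq' : ∀ y : Fin 3 → ℝ, y ⬝ᵥ (Km n * b).mulVec y = 0 := by
    intro y
    rw [← mulVec_mulVec]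
    rw [← det3K n y (b.mulVec y)]
    exact hq y
  set M := Km n * b with hM
  have e0 := hq' ![1,0,0]
  have e1 := hq' ![0,1,0]
  have e2 := hq' ![0,0,1]
  have e01 := hq' ![1,1,0]
  have e02 := hq' ![1,0,1]
  have e12 := hq' ![0,1,1]
  simp [dotProduct, Matrix.mulVec, Fin.sum_univ_three] at e0 e1 e2 e01 e02 e12
  have hanti : Mᵀ = -M := by
    ext i j
    fin_cases i <;> fin_cases j <;>
      simp only [Matrix.transpose_apply, Matrix.neg_apply, Fin.zero_eta, Fin.mk_one, Fin.reduceFinMk] <;> linarith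
  have hcomm : b * Km n = Km n * b := by
    have h' := congrArg Matrix.transpose hanti
    rw [transpose_transpose, transpose_neg, transpose_mul, hb, Kt, mul_neg, neg_neg] at h'
    exact h'.symm
  have hKbn : (Km n).mulVec (b.mulVec n) = 0 := by
    rw [mulVec_mulVec, ← hcomm, ← mulVec_mulVec, Kn, mulVec_zero]
  have hbn : b.mulVec n = (n ⬝ᵥ b.mulVec n) • n := by
    have h1 : (Km n * Km n).mulVec (b.mulVec n) = 0 := by
      rw [← mulVec_mulVec, hKbn, mulVec_zero]
    rw [KK n hn, sub_mulVec, Pmv, one_mulVec] at h1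
    have := sub_eq_zero.mp h1
    exact this.symm
  set κ := n ⬝ᵥ b.mulVec n with hκ
  have hbP : b * Pm n = κ • Pm n := by
    ext i j
    have := congrFun hbn i
    simp [Matrix.mulVec, dotProduct, Fin.sum_univ_three] at this
    simp [Pm, Matrix.mul_apply, Fin.sum_univ_three]
    linear_combination (n j) * this
  have hKbK : Km n * b * Km n = κ • Pm n - b := by
    rw [← hcomm, mul_assoc, KK n hn, mul_sub, hbP, mul_one]
  exact structK n b κ hn hb hbn hKbK

lemma det3_zero (n x : Fin 3 → ℝ) (m m' : Matrix (Fin 3) (Fin 3) ℝ) (β γ β' γ' : ℝ)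
    (hm : m = β • 1 + γ • Pm n) (hm' : m' = β' • 1 + γ' • Pm n) :
    det3 x (m.mulVec x) (m'.mulVec x) = 0 := by
  have h1 : m.mulVec x = β • x + (γ * (n ⬝ᵥ x)) • n := by
    rw [hm, add_mulVec, smul_mulVec, one_mulVec, smul_mulVec, Pmv, smul_smul]
  have h2 : m'.mulVec x = β' • x + (γ' * (n ⬝ᵥ x)) • n := by
    rw [hm', add_mulVec, smul_mulVec, one_mulVec, smul_mulVec, Pmv, smul_smul]
  rw [h1, h2, det3_eq]
  simp only [Pi.add_apply, Pi.smul_apply, smul_eq_mul]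
  ring

/-- Let `a` be a real symmetric `3 × 3` matrix with exactly two distinct
eigenvalues (transversely isotropic) and `b` any real symmetric `3 × 3` matrix. The pair
`(a, b)` is transversely isotropic (some unit vector `n` is such that every rotation fixing
`n` fixes both `a` and `b`) iff `a × b = 0`, i.e. `det(x, a·x, b·x) = 0` for every `x`. -/
theorem pair_transversely_isotropic_iff_cross_product_eq_zero
    (a b : Matrix (Fin 3) (Fin 3) ℝ) (ha : aᵀ = a) (hb : bᵀ = b)
    (h2 : (spectrum ℝ a).ncard = 2) :
    (∃ n : Fin 3 → ℝ, (∑ i, n i ^ 2) = 1 ∧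
        ∀ g ∈ SO3, g.mulVec n = n → g * a * gᵀ = a ∧ g * b * gᵀ = b) ↔
      ∀ x : Fin 3 → ℝ, det3 x (a.mulVec x) (b.mulVec x) = 0 := by
  constructor
  · rintro ⟨n, hn, hfix⟩ x
    obtain ⟨h1a, h1b⟩ := hfix (G1 n) (G1mem n hn) (G1n n hn)
    obtain ⟨h2a, h2b⟩ := hfix (G2 n) (G2mem n hn) (G2n n hn)
    obtain ⟨β, γ, hA⟩ := fwd n a hn ha h1a h2a
    obtain ⟨β', γ', hB⟩ := fwd n b hn hb h1b h2b
    exact det3_zero n x a b β γ β' γ' hA hB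
  · intro H
    obtain ⟨n, hn, lam, c, hc, haS⟩ := spectral a ha h2
    have hq := bwd_q n a b hn lam c hc haS H
    obtain ⟨β, γ, hB⟩ := bwd_struct n b hn hb hq
    exact ⟨n, hn, fun g hg hgn =>
      ⟨gfix n g a lam c hg.1 hgn haS, gfix n g b β γ hg.1 hgn hB⟩⟩
end

section
/- Let (a₁, …, aₙ) be an n-tuple of real symmetric 3×3 matrices. Then the family is transversely isotropic — i.e. there is a unit vector n ∈ ℝ³ such that every g ∈ SO(3) with g·n = n satisfies g aₖ gᵀ = aₖ for all k, but the family is not isotropic (not every g ∈ SO(3) fixes every aₖ) — if and only if there exists an index j such that: aⱼ is not a scalar multiple of the identity (aⱼ′ ≠ 0), det(x, aⱼ·x, aⱼ²·x) = 0 for every x ∈ ℝ³ (aⱼ × aⱼ² = 0), and for every index k, det(x, aⱼ·x, aₖ·x) = 0 for every x ∈ ℝ³ (aⱼ × aₖ = 0). -/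
open Matrix

namespace TI

noncomputable section

abbrev M3 := Matrix (Fin 3) (Fin 3) ℝ

/-- `v vᵀ` as a matrix. -/
def pm (v : Fin 3 → ℝ) : M3 := Matrix.of fun i j => v i * v j

/-- cross-product matrix of `v`. -/
def km (v : Fin 3 → ℝ) : M3 :=
  Matrix.of ![![0, -v 2, v 1], ![v 2, 0, -v 0], ![-v 1, v 0, 0]]

variable {v : Fin 3 → ℝ}

lemma km_transpose (v : Fin 3 → ℝ) : (km v)ᵀ = -km v := by
  ext i j; fin_cases i <;> fin_cases j <;> simp [km]

lemma pm_transpose (v : Fin 3 → ℝ) : (pm v)ᵀ = pm v := by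
  ext i j; simp [pm, mul_comm]

lemma km_mul_km (hv : v 0 ^ 2 + v 1 ^ 2 + v 2 ^ 2 = 1) : km v * km v = pm v - 1 := by
  ext i j
  fin_cases i <;> fin_cases j <;>
    simp [km, pm, Matrix.mul_apply, Fin.sum_univ_three, Matrix.one_apply] <;> linarith [hv]

lemma pm_mul_pm (hv : v 0 ^ 2 + v 1 ^ 2 + v 2 ^ 2 = 1) : pm v * pm v = pm v := by
  ext i j
  simp [pm, Matrix.mul_apply, Fin.sum_univ_three]
  linear_combination (v i * v j) * hv

lemma pm_mul_km (v : Fin 3 → ℝ) : pm v * km v = 0 := by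
  ext i j
  fin_cases j <;> simp [km, pm, Matrix.mul_apply, Fin.sum_univ_three] <;> ring

lemma km_mul_pm (v : Fin 3 → ℝ) : km v * pm v = 0 := by
  ext i j
  fin_cases i <;> simp [km, pm, Matrix.mul_apply, Fin.sum_univ_three] <;> ring

lemma pm_mulVec (v w : Fin 3 → ℝ) : pm v *ᵥ w = (v ⬝ᵥ w) • v := by
  ext i
  simp [pm, Matrix.mulVec, dotProduct, Fin.sum_univ_three]
  ring

lemma km_mulVec_self (v : Fin 3 → ℝ) : km v *ᵥ v = 0 := by
  ext i
  fin_cases i <;> simp [km, Matrix.mulVec, dotProduct, Fin.sum_univ_three] <;> ring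

lemma dot_self (hv : v 0 ^ 2 + v 1 ^ 2 + v 2 ^ 2 = 1) : v ⬝ᵥ v = 1 := by
  simp [dotProduct, Fin.sum_univ_three]; nlinarith [hv]

lemma trace_pm (hv : v 0 ^ 2 + v 1 ^ 2 + v 2 ^ 2 = 1) : (pm v).trace = 1 := by
  simp [Matrix.trace, Matrix.diag, pm, Fin.sum_univ_three]; nlinarith [hv]

def rot1 (v : Fin 3 → ℝ) : M3 := pm v + km v

def rot2 (v : Fin 3 → ℝ) : M3 := pm v + pm v - 1

lemma rot1_mem (hv : v 0 ^ 2 + v 1 ^ 2 + v 2 ^ 2 = 1) : rot1 v ∈ SO3 := by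
  constructor
  · have : (rot1 v) * (rot1 v)ᵀ =
        pm v * pm v - pm v * km v + (km v * pm v - km v * km v) := by
      rw [rot1, transpose_add, pm_transpose, km_transpose]; noncomm_ring
    rw [this, pm_mul_pm hv, pm_mul_km, km_mul_pm, km_mul_km hv]
    noncomm_ring
  · show (rot1 v).det = 1
    rw [Matrix.det_fin_three]
    simp [rot1, km, pm]
    linear_combination (1 + v 0 ^ 2 + v 1 ^ 2 + v 2 ^ 2) * hv

lemma rot2_mem (hv : v 0 ^ 2 + v 1 ^ 2 + v 2 ^ 2 = 1) : rot2 v ∈ SO3 := by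
  constructor
  · have ht : (rot2 v)ᵀ = rot2 v := by
      rw [rot2, transpose_sub, transpose_add, pm_transpose, transpose_one]
    rw [ht]
    have h2 : rot2 v * rot2 v = pm v * pm v + pm v * pm v + pm v * pm v + pm v * pm v
        - pm v - pm v - pm v - pm v + 1 := by
      rw [rot2]; noncomm_ring
    rw [h2, pm_mul_pm hv]
    noncomm_ring
  · show (rot2 v).det = 1
    rw [Matrix.det_fin_three]
    simp [rot2, pm, Matrix.one_apply, Matrix.sub_apply, Matrix.add_apply]
    linear_combination 2 * hv

lemma rot1_fix (hv : v 0 ^ 2 + v 1 ^ 2 + v 2 ^ 2 = 1) : (rot1 v).mulVec v = v := by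
  rw [rot1, Matrix.add_mulVec, pm_mulVec, km_mulVec_self, dot_self hv]
  simp

lemma rot2_fix (hv : v 0 ^ 2 + v 1 ^ 2 + v 2 ^ 2 = 1) : (rot2 v).mulVec v = v := by
  rw [rot2, Matrix.sub_mulVec, Matrix.add_mulVec, pm_mulVec, dot_self hv,
    Matrix.one_mulVec, one_smul]
  ext i
  simp

lemma comm_of_fix {g a : M3} (hg : g * gᵀ = 1) (hfix : g * a * gᵀ = a) : g * a = a * g := by
  have hg' : gᵀ * g = 1 := mul_eq_one_comm.mp hg
  calc g * a = g * a * (gᵀ * g) := by rw [hg', Matrix.mul_one]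
    _ = (g * a * gᵀ) * g := by noncomm_ring
    _ = a * g := by rw [hfix]

lemma conj_pm (g : M3) (v : Fin 3 → ℝ) : g * pm v * gᵀ = pm (g *ᵥ v) := by
  ext i j
  simp [pm, Matrix.mul_apply, Matrix.mulVec, dotProduct, Fin.sum_univ_three]
  ring

/-- a vector whose cross product with unit `v` vanishes is a multiple of `v`. -/
lemma crossfix (w : Fin 3 → ℝ) (hv : v 0 ^ 2 + v 1 ^ 2 + v 2 ^ 2 = 1)
    (h0 : w 1 * v 2 - w 2 * v 1 = 0) (h1 : w 2 * v 0 - w 0 * v 2 = 0)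
    (h2 : w 0 * v 1 - w 1 * v 0 = 0) :
    w = (w 0 * v 0 + w 1 * v 1 + w 2 * v 2) • v := by
  ext i
  fin_cases i
  · show w 0 = _ * v 0
    linear_combination -w 0 * hv + v 1 * h2 - v 2 * h1
  · show w 1 = _ * v 1
    linear_combination -w 1 * hv - v 0 * h2 + v 2 * h0
  · show w 2 = _ * v 2
    linear_combination -w 2 * hv + v 0 * h1 - v 1 * h0

/-- an antisymmetric 3×3 matrix is the cross-product matrix of a vector. -/
lemma antisym_eq_km {m : M3} (hm : mᵀ = -m) : m = km ![m 2 1, m 0 2, m 1 0] := by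
  have e : ∀ i j : Fin 3, m j i = -m i j := fun i j => by
    have := congrFun (congrFun hm i) j; simpa using this
  ext i j
  fin_cases i <;> fin_cases j <;> simp [km]
  · linear_combination (1/2 : ℝ) * e 0 0
  · linear_combination e 1 0
  · linear_combination (1/2 : ℝ) * e 1 1
  · linear_combination e 2 1
  · linear_combination e 0 2
  · linear_combination (1/2 : ℝ) * e 2 2

lemma pm_mul_of_symm {c : M3} (hsym : cᵀ = c) (hcv : c *ᵥ v = 0) : pm v * c = 0 := by
  have hrow : ∀ j : Fin 3, c j 0 * v 0 + c j 1 * v 1 + c j 2 * v 2 = 0 := fun j => by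
    have := congrFun hcv j
    simpa [Matrix.mulVec, dotProduct, Fin.sum_univ_three] using this
  have e : ∀ i j : Fin 3, c j i = c i j := fun i j => by
    conv_lhs => rw [← hsym]
    rfl
  ext i j
  simp [pm, Matrix.mul_apply, Fin.sum_univ_three]
  linear_combination (v i) * hrow j - (v i * v 0) * e 0 j - (v i * v 1) * e 1 j
    - (v i * v 2) * e 2 j

/-- CORE: symmetric, traceless, commutes with `km v`, kills `v` ⇒ zero. -/
lemma core {c : M3} (hv : v 0 ^ 2 + v 1 ^ 2 + v 2 ^ 2 = 1) (hsym : cᵀ = c)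
    (hcomm : km v * c = c * km v) (hcv : c *ᵥ v = 0) (htr : c.trace = 0) : c = 0 := by
  set m := km v * c with hmdef
  have hmT : mᵀ = -m := by
    rw [hmdef, transpose_mul, km_transpose, hsym, Matrix.mul_neg, ← hcomm]
  have hmv : m *ᵥ v = 0 := by
    rw [hmdef, ← Matrix.mulVec_mulVec, hcv, Matrix.mulVec_zero]
  set w : Fin 3 → ℝ := ![m 2 1, m 0 2, m 1 0] with hwdef
  have hmkm : m = km w := antisym_eq_km hmT
  have hX : ∀ i, (km w *ᵥ v) i = 0 := fun i => by rw [← hmkm, hmv]; rfl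
  have X0 := hX 0; have X1 := hX 1; have X2 := hX 2
  simp [km, Matrix.mulVec, dotProduct, Fin.sum_univ_three, hwdef] at X0 X1 X2
  have hw : w = (w 0 * v 0 + w 1 * v 1 + w 2 * v 2) • v := by
    apply crossfix w hv <;> simp [hwdef] <;> linarith [X0, X1, X2]
  set t : ℝ := w 0 * v 0 + w 1 * v 1 + w 2 * v 2 with htdef
  have hkmt : km w = t • km v := by
    rw [hw]
    ext i j
    fin_cases i <;> fin_cases j <;> simp [km] <;> ring
  have h2 : km v * m = t • (pm v - 1) := by
    rw [hmkm, hkmt, Matrix.mul_smul, km_mul_km hv]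
  have h3 : (pm v - 1) * c = t • (pm v - 1) := by
    calc (pm v - 1) * c = km v * km v * c := by rw [km_mul_km hv]
      _ = km v * m := by rw [hmdef, Matrix.mul_assoc]
      _ = t • (pm v - 1) := h2
  have h4 : pm v * c = 0 := pm_mul_of_symm hsym hcv
  have h5 : -c = t • pm v - t • 1 := by
    have := h3
    rw [Matrix.sub_mul, h4, smul_sub] at this
    simpa using this
  have h6 : -c.trace = t * (pm v).trace - t * 3 := by
    rw [← Matrix.trace_neg, h5]
    simp [Matrix.trace_sub, Matrix.trace_smul, Matrix.trace_one, smul_eq_mul]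
    try ring
  rw [htr, trace_pm hv] at h6
  have ht0 : t = 0 := by linarith
  have : -c = 0 := by rw [h5, ht0]; simp
  simpa using this

lemma det3_expand (u v w : Fin 3 → ℝ) :
    det3 u v w = u 0 * (v 1 * w 2 - v 2 * w 1) - v 0 * (u 1 * w 2 - u 2 * w 1)
      + w 0 * (u 1 * v 2 - u 2 * v 1) := by
  rw [det3, Matrix.det_fin_three]
  simp
  ring

/-- quadratic-form hypothesis gives commutation with `km v`. -/
lemma qcomm {c : M3} (hsym : cᵀ = c) (hQ : ∀ x : Fin 3 → ℝ, det3 x v (c *ᵥ x) = 0) :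
    km v * c = c * km v := by
  have H0 := hQ ![1,0,0]
  have H1 := hQ ![0,1,0]
  have H2 := hQ ![0,0,1]
  have H01 := hQ ![1,1,0]
  have H02 := hQ ![1,0,1]
  have H12 := hQ ![0,1,1]
  simp [det3_expand, Matrix.mulVec, dotProduct, Fin.sum_univ_three] at H0 H1 H2 H01 H02 H12
  have hNN : ∀ i j : Fin 3, (km v * c) i j + (km v * c) j i = 0 := by
    intro i j
    fin_cases i <;> fin_cases j <;>
      simp [km, Matrix.mul_apply, Fin.sum_univ_three, -Matrix.cons_mul]
    · linear_combination H0
    · linear_combination H01 - H0 - H1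
    · linear_combination H02 - H0 - H2
    · linear_combination H01 - H0 - H1
    · linear_combination H1
    · linear_combination H12 - H1 - H2
    · linear_combination H02 - H0 - H2
    · linear_combination H12 - H1 - H2
    · linear_combination H2
  have hNN' : km v * c + (km v * c)ᵀ = 0 := by
    ext i j
    simp only [Matrix.add_apply, Matrix.transpose_apply, Matrix.zero_apply]
    exact hNN i j
  have h1 : km v * c = -(km v * c)ᵀ := eq_neg_of_add_eq_zero_left hNN'
  rw [h1, transpose_mul, km_transpose, hsym, Matrix.mul_neg, neg_neg]

/-- dividing out the factor `v ⬝ x` by polynomial interpolation. -/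
lemma lagrange {b : M3} (hv : v 0 ^ 2 + v 1 ^ 2 + v 2 ^ 2 = 1)
    (hs : ∀ y : Fin 3 → ℝ,
      (v 0 * y 0 + v 1 * y 1 + v 2 * y 2) * det3 y v (b *ᵥ y) = 0) :
    ∀ x : Fin 3 → ℝ, det3 x v (b *ᵥ x) = 0 := by
  intro x
  set s : ℝ := v 0 * x 0 + v 1 * x 1 + v 2 * x 2 with hsdef
  have H : ∀ t : ℝ, (s + t) * det3 (x + t • v) v (b *ᵥ (x + t • v)) = 0 := by
    intro t
    have h := hs (x + t • v)
    have e : v 0 * (x + t • v) 0 + v 1 * (x + t • v) 1 + v 2 * (x + t • v) 2 = s + t := by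
      simp only [Pi.add_apply, Pi.smul_apply, smul_eq_mul]
      linear_combination t * hv
    rw [e] at h
    exact h
  have G1 := H (1 - s)
  have G2 := H (2 - s)
  have G3 := H (3 - s)
  simp only [det3_expand, Matrix.mulVec, dotProduct, Fin.sum_univ_three,
    Pi.add_apply, Pi.smul_apply, smul_eq_mul] at G1 G2 G3 ⊢
  linear_combination ((s-2)*(s-3)/2) * G1 + (-(s-1)*(s-3)/2) * G2 + ((s-1)*(s-2)/6) * G3

/-- symmetric matrices with all `det3 x v (b x)` zero are in `span {1, pm v}`. -/
lemma flat {b : M3} (hv : v 0 ^ 2 + v 1 ^ 2 + v 2 ^ 2 = 1) (hb : bᵀ = b)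
    (hQ : ∀ x : Fin 3 → ℝ, det3 x v (b *ᵥ x) = 0) :
    ∃ γ δ : ℝ, b = γ • 1 + δ • pm v := by
  have key : det3 ![v 1 * (b *ᵥ v) 2 - v 2 * (b *ᵥ v) 1,
      v 2 * (b *ᵥ v) 0 - v 0 * (b *ᵥ v) 2,
      v 0 * (b *ᵥ v) 1 - v 1 * (b *ᵥ v) 0] v (b *ᵥ v) = 0 := by
    set u : Fin 3 → ℝ := ![v 1 * (b *ᵥ v) 2 - v 2 * (b *ᵥ v) 1,
      v 2 * (b *ᵥ v) 0 - v 0 * (b *ᵥ v) 2,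
      v 0 * (b *ᵥ v) 1 - v 1 * (b *ᵥ v) 0] with hu
    have E1 := hQ (u + v)
    have E0 := hQ u
    rw [Matrix.mulVec_add] at E1
    simp only [det3_expand, Pi.add_apply] at E1 E0 ⊢
    linear_combination E1 - E0
  have hsq : (v 1 * (b *ᵥ v) 2 - v 2 * (b *ᵥ v) 1) ^ 2
      + (v 2 * (b *ᵥ v) 0 - v 0 * (b *ᵥ v) 2) ^ 2
      + (v 0 * (b *ᵥ v) 1 - v 1 * (b *ᵥ v) 0) ^ 2 = 0 := by
    simp only [det3_expand] at key
    simp at key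
    linear_combination key
  have c0 : v 1 * (b *ᵥ v) 2 - v 2 * (b *ᵥ v) 1 = 0 := by
    nlinarith [hsq, sq_nonneg (v 1 * (b *ᵥ v) 2 - v 2 * (b *ᵥ v) 1),
      sq_nonneg (v 2 * (b *ᵥ v) 0 - v 0 * (b *ᵥ v) 2),
      sq_nonneg (v 0 * (b *ᵥ v) 1 - v 1 * (b *ᵥ v) 0)]
  have c1 : v 2 * (b *ᵥ v) 0 - v 0 * (b *ᵥ v) 2 = 0 := by
    nlinarith [hsq, sq_nonneg (v 1 * (b *ᵥ v) 2 - v 2 * (b *ᵥ v) 1),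
      sq_nonneg (v 2 * (b *ᵥ v) 0 - v 0 * (b *ᵥ v) 2),
      sq_nonneg (v 0 * (b *ᵥ v) 1 - v 1 * (b *ᵥ v) 0)]
  have c2 : v 0 * (b *ᵥ v) 1 - v 1 * (b *ᵥ v) 0 = 0 := by
    nlinarith [hsq, sq_nonneg (v 1 * (b *ᵥ v) 2 - v 2 * (b *ᵥ v) 1),
      sq_nonneg (v 2 * (b *ᵥ v) 0 - v 0 * (b *ᵥ v) 2),
      sq_nonneg (v 0 * (b *ᵥ v) 1 - v 1 * (b *ᵥ v) 0)]
  have hbv : b *ᵥ v = ((b *ᵥ v) 0 * v 0 + (b *ᵥ v) 1 * v 1 + (b *ᵥ v) 2 * v 2) • v := by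
    apply crossfix (b *ᵥ v) hv <;> linarith [c0, c1, c2]
  set cst : ℝ := (b *ᵥ v) 0 * v 0 + (b *ᵥ v) 1 * v 1 + (b *ᵥ v) 2 * v 2 with hcst
  set γ : ℝ := (b.trace - cst) / 2 with hγ
  set δ : ℝ := cst - γ with hδ
  set d : M3 := b - γ • 1 - δ • pm v with hd
  have hdsym : dᵀ = d := by
    rw [hd, transpose_sub, transpose_sub, transpose_smul, transpose_smul, transpose_one,
      pm_transpose, hb]
  have hdv : d *ᵥ v = 0 := by
    rw [hd, Matrix.sub_mulVec, Matrix.sub_mulVec, Matrix.smul_mulVec,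
      Matrix.smul_mulVec, pm_mulVec, dot_self hv, Matrix.one_mulVec, hbv]
    ext i
    simp [hδ]
    ring
  have hdtr : d.trace = 0 := by
    rw [hd, Matrix.trace_sub, Matrix.trace_sub, Matrix.trace_smul, Matrix.trace_smul,
      Matrix.trace_one, trace_pm hv]
    simp [hγ, hδ]
    ring
  have hQd : ∀ x : Fin 3 → ℝ, det3 x v (d *ᵥ x) = 0 := by
    intro x
    have h := hQ x
    rw [hd, Matrix.sub_mulVec, Matrix.sub_mulVec, Matrix.smul_mulVec,
      Matrix.smul_mulVec, pm_mulVec, Matrix.one_mulVec]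
    simp only [det3_expand, Pi.sub_apply, Pi.smul_apply, smul_eq_mul,
      dotProduct, Fin.sum_univ_three] at h ⊢
    linear_combination h
  have hd0 : d = 0 := core hv hdsym (qcomm hdsym hQd) hdv hdtr
  refine ⟨γ, δ, ?_⟩
  have hz : b - γ • 1 - δ • pm v = 0 := hd0
  linear_combination (norm := skip) hz
  abel

/-- invariance under the two canonical axis rotations gives the dyadic form. -/
lemma classify {a : M3} (hv : v 0 ^ 2 + v 1 ^ 2 + v 2 ^ 2 = 1) (hsym : aᵀ = a)
    (h1 : rot1 v * a * (rot1 v)ᵀ = a) (h2 : rot2 v * a * (rot2 v)ᵀ = a) :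
    ∃ α β : ℝ, a = α • 1 + β • pm v := by
  have c1 : rot1 v * a = a * rot1 v := comm_of_fix (rot1_mem hv).1 h1
  have c2 : rot2 v * a = a * rot2 v := comm_of_fix (rot2_mem hv).1 h2
  have cpm : pm v * a = a * pm v := by
    have e : pm v * a + pm v * a - a = a * pm v + a * pm v - a := by
      have := c2
      rw [rot2, sub_mul, add_mul, mul_sub, mul_add, one_mul, mul_one] at this
      exact this
    ext i j
    have h' := congrFun (congrFun e i) j
    simp only [Matrix.add_apply, Matrix.sub_apply] at h'
    linarith
  have ckm : km v * a = a * km v := by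
    have e : pm v * a + km v * a = a * pm v + a * km v := by
      have := c1
      rw [rot1, add_mul, mul_add] at this
      exact this
    rw [cpm] at e
    exact add_left_cancel e
  set q : ℝ := v ⬝ᵥ (a *ᵥ v) with hq
  have hav : a *ᵥ v = q • v := by
    have e1 : (pm v * a) *ᵥ v = q • v := by
      rw [← Matrix.mulVec_mulVec, pm_mulVec]
    have e2 : (a * pm v) *ᵥ v = a *ᵥ v := by
      rw [← Matrix.mulVec_mulVec, pm_mulVec, dot_self hv, one_smul]
    rw [← cpm, e1] at e2
    exact e2.symm
  set γ : ℝ := (a.trace - q) / 2 with hγ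
  set δ : ℝ := q - γ with hδ
  set d : M3 := a - γ • 1 - δ • pm v with hd
  have hdsym : dᵀ = d := by
    rw [hd, transpose_sub, transpose_sub, transpose_smul, transpose_smul, transpose_one,
      pm_transpose, hsym]
  have hdv : d *ᵥ v = 0 := by
    rw [hd, Matrix.sub_mulVec, Matrix.sub_mulVec, Matrix.smul_mulVec,
      Matrix.smul_mulVec, pm_mulVec, dot_self hv, Matrix.one_mulVec, hav]
    ext i
    simp [hδ]
    ring
  have hdtr : d.trace = 0 := by
    rw [hd, Matrix.trace_sub, Matrix.trace_sub, Matrix.trace_smul, Matrix.trace_smul,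
      Matrix.trace_one, trace_pm hv]
    simp [hγ, hδ]
    ring
  have hdcomm : km v * d = d * km v := by
    rw [hd]
    rw [mul_sub, mul_sub, sub_mul, sub_mul, mul_smul_comm, mul_smul_comm, smul_mul_assoc,
      smul_mul_assoc, mul_one, one_mul, pm_mul_km, km_mul_pm, ckm]
  have hd0 : d = 0 := core hv hdsym hdcomm hdv hdtr
  refine ⟨γ, δ, ?_⟩
  have hz : a - γ • 1 - δ • pm v = 0 := hd0
  linear_combination (norm := skip) hz
  abel

/-- from two equal eigenvalues and an orthonormal eigenbasis, get the dyadic form. -/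
lemma eig_form {A : M3} {u0 u1 u2 : Fin 3 → ℝ} {l0 l2 : ℝ}
    (h0 : A *ᵥ u0 = l0 • u0) (h1 : A *ᵥ u1 = l0 • u1) (h2 : A *ᵥ u2 = l2 • u2)
    (o00 : u0 ⬝ᵥ u0 = 1) (o11 : u1 ⬝ᵥ u1 = 1) (o22 : u2 ⬝ᵥ u2 = 1)
    (o01 : u0 ⬝ᵥ u1 = 0) (o02 : u0 ⬝ᵥ u2 = 0) (o12 : u1 ⬝ᵥ u2 = 0) :
    A = l0 • 1 + (l2 - l0) • pm u2 ∧ u2 0 ^ 2 + u2 1 ^ 2 + u2 2 ^ 2 = 1 := by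
  have hunit : u2 0 ^ 2 + u2 1 ^ 2 + u2 2 ^ 2 = 1 := by
    have := o22
    simp [dotProduct, Fin.sum_univ_three] at this
    linarith [this, sq_abs (u2 0)]
  simp only [dotProduct, Fin.sum_univ_three] at o00 o11 o22 o01 o02 o12
  set Ut : M3 := Matrix.of ![u0, u1, u2] with hUt
  have hUU : Ut * Utᵀ = 1 := by
    ext k l
    fin_cases k <;> fin_cases l <;>
      simp [hUt, Matrix.mul_apply, Fin.sum_univ_three, Matrix.one_apply,
        -Matrix.cons_mul, -Matrix.cons_transpose] <;>
      first
        | linear_combination o00 | linear_combination o11 | linear_combination o22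
        | linear_combination o01 | linear_combination o02 | linear_combination o12
  have hUtU : Utᵀ * Ut = 1 := mul_eq_one_comm.mp hUU
  have hres : pm u0 + pm u1 + pm u2 = 1 := by
    ext i j
    have := congrFun (congrFun hUtU i) j
    simp [hUt, Matrix.mul_apply, Fin.sum_univ_three, Matrix.one_apply,
      -Matrix.cons_mul, -Matrix.cons_transpose] at this
    simpa [pm, Matrix.one_apply] using this
  have hApm : ∀ (w : Fin 3 → ℝ) (l : ℝ), A *ᵥ w = l • w → A * pm w = l • pm w := by
    intro w l h
    ext i j
    have hc := congrFun h i
    simp only [Matrix.mulVec, dotProduct, Fin.sum_univ_three, Pi.smul_apply,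
      smul_eq_mul] at hc
    simp [pm, Matrix.mul_apply, Fin.sum_univ_three]
    linear_combination (w j) * hc
  constructor
  · have hA1 : A = l0 • pm u0 + l0 • pm u1 + l2 • pm u2 := by
      calc A = A * 1 := (mul_one A).symm
        _ = A * pm u0 + A * pm u1 + A * pm u2 := by rw [← hres, mul_add, mul_add]
        _ = _ := by rw [hApm u0 l0 h0, hApm u1 l0 h1, hApm u2 l2 h2]
    rw [hA1, ← hres]
    module
  · exact hunit

/-- spectral decomposition: `a × a² = 0` forces the dyadic form. -/
lemma spec {A : M3} (hsym : Aᵀ = A)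
    (hvan : ∀ x : Fin 3 → ℝ, det3 x (A *ᵥ x) ((A * A) *ᵥ x) = 0) :
    ∃ (v : Fin 3 → ℝ) (α β : ℝ),
      v 0 ^ 2 + v 1 ^ 2 + v 2 ^ 2 = 1 ∧ A = α • 1 + β • pm v := by
  have hherm : A.IsHermitian := by
    show Aᴴ = A
    rw [Matrix.conjTranspose_eq_transpose_of_trivial]
    exact hsym
  set w : Fin 3 → (Fin 3 → ℝ) := fun k => (hherm.eigenvectorBasis k : EuclideanSpace ℝ (Fin 3))
    with hwdef
  set l : Fin 3 → ℝ := hherm.eigenvalues with hldef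
  have heig : ∀ k, A *ᵥ w k = l k • w k := fun k => hherm.mulVec_eigenvectorBasis k
  have horth : ∀ k m, w k ⬝ᵥ w m = if k = m then 1 else 0 := by
    intro k m
    have h := orthonormal_iff_ite.mp hherm.eigenvectorBasis.orthonormal k m
    simp [PiLp.inner_apply, RCLike.inner_apply, conj_trivial, dotProduct] at h
    simp only [dotProduct]
    rw [← h]
    exact Finset.sum_congr rfl (fun i _ => mul_comm _ _)
  have o00 : w 0 ⬝ᵥ w 0 = 1 := by simpa using horth 0 0
  have o11 : w 1 ⬝ᵥ w 1 = 1 := by simpa using horth 1 1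
  have o22 : w 2 ⬝ᵥ w 2 = 1 := by simpa using horth 2 2
  have o01 := horth 0 1; have o02 := horth 0 2; have o12 := horth 1 2
  have o10 := horth 1 0; have o20 := horth 2 0; have o21 := horth 2 1
  rw [if_neg (by decide)] at o01
  rw [if_neg (by decide)] at o02
  rw [if_neg (by decide)] at o12
  rw [if_neg (by decide)] at o10
  rw [if_neg (by decide)] at o20
  rw [if_neg (by decide)] at o21
  set Ut : M3 := Matrix.of ![w 0, w 1, w 2] with hUt
  have hUU : Ut * Utᵀ = 1 := by
    have d00 := o00; have d11 := o11; have d22 := o22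
    have d01 := o01; have d02 := o02; have d12 := o12
    simp only [dotProduct, Fin.sum_univ_three] at d00 d11 d22 d01 d02 d12
    ext k m
    fin_cases k <;> fin_cases m <;>
      simp [hUt, Matrix.mul_apply, Fin.sum_univ_three, Matrix.one_apply,
        -Matrix.cons_mul, -Matrix.cons_transpose] <;>
      first
        | linear_combination d00 | linear_combination d11 | linear_combination d22
        | linear_combination d01 | linear_combination d02 | linear_combination d12
  have hdet3 : det3 (w 0) (w 1) (w 2) = Utᵀ.det := by
    congr 1
  have hD2 : det3 (w 0) (w 1) (w 2) ^ 2 = 1 := by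
    rw [hdet3]
    have h' : Utᵀ.det ^ 2 = Ut.det * Utᵀ.det := by rw [Matrix.det_transpose]; ring
    rw [h', ← Matrix.det_mul, hUU, Matrix.det_one]
  have hDne : det3 (w 0) (w 1) (w 2) ≠ 0 := by
    intro h
    rw [h] at hD2
    norm_num at hD2
  set x : Fin 3 → ℝ := w 0 + w 1 + w 2 with hx
  have hAx : A *ᵥ x = l 0 • w 0 + l 1 • w 1 + l 2 • w 2 := by
    rw [hx, Matrix.mulVec_add, Matrix.mulVec_add, heig 0, heig 1, heig 2]
  have hAAx : (A * A) *ᵥ x = (l 0 * l 0) • w 0 + (l 1 * l 1) • w 1 + (l 2 * l 2) • w 2 := by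
    rw [← Matrix.mulVec_mulVec, hAx, Matrix.mulVec_add, Matrix.mulVec_add,
      Matrix.mulVec_smul, Matrix.mulVec_smul, Matrix.mulVec_smul, heig 0, heig 1, heig 2,
      smul_smul, smul_smul, smul_smul]
  have hvdm : (l 1 - l 0) * ((l 2 - l 0) * (l 2 - l 1)) * det3 (w 0) (w 1) (w 2) = 0 := by
    have h := hvan x
    rw [hAx, hAAx] at h
    simp only [det3_expand, hx, Pi.add_apply, Pi.smul_apply, smul_eq_mul] at h ⊢
    linear_combination h
  rcases mul_eq_zero.mp hvdm with h | h
  swap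
  · exact absurd h hDne
  rcases mul_eq_zero.mp h with h | h
  · have e : l 1 = l 0 := by linarith [sub_eq_zero.mp h]
    have h1' : A *ᵥ w 1 = l 0 • w 1 := by rw [heig 1, e]
    obtain ⟨hform, hunit⟩ := eig_form (heig 0) h1' (heig 2) o00 o11 o22 o01 o02 o12
    exact ⟨w 2, l 0, l 2 - l 0, hunit, hform⟩
  rcases mul_eq_zero.mp h with h | h
  · have e : l 2 = l 0 := by linarith [sub_eq_zero.mp h]
    have h1' : A *ᵥ w 2 = l 0 • w 2 := by rw [heig 2, e]
    obtain ⟨hform, hunit⟩ := eig_form (heig 0) h1' (heig 1) o00 o22 o11 o02 o01 o21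
    exact ⟨w 1, l 0, l 1 - l 0, hunit, hform⟩
  · have e : l 2 = l 1 := by linarith [sub_eq_zero.mp h]
    have h1' : A *ᵥ w 2 = l 1 • w 2 := by rw [heig 2, e]
    obtain ⟨hform, hunit⟩ := eig_form (heig 1) h1' (heig 0) o11 o22 o00 o12 o10 o20
    exact ⟨w 0, l 1, l 0 - l 1, hunit, hform⟩

/-- conjugation of the standard form. -/
lemma conj_form {g : M3} (hg : g * gᵀ = 1) (α β : ℝ) :
    g * (α • 1 + β • pm v) * gᵀ = α • 1 + β • pm (g *ᵥ v) := by
  rw [mul_add, add_mul, mul_smul_comm, smul_mul_assoc, mul_smul_comm, smul_mul_assoc,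
    mul_one, hg, conj_pm]

lemma not_scalar (hv : v 0 ^ 2 + v 1 ^ 2 + v 2 ^ 2 = 1) {α β c : ℝ} (hβ : β ≠ 0) :
    α • (1 : M3) + β • pm v ≠ c • 1 := by
  intro h
  have e : ∀ i j : Fin 3, α * (if i = j then (1:ℝ) else 0) + β * (v i * v j)
      = c * (if i = j then 1 else 0) := by
    intro i j
    have := congrFun (congrFun h i) j
    simpa [pm, Matrix.one_apply, Matrix.add_apply, Matrix.smul_apply] using this
  have E01 := e 0 1
  have E00 := e 0 0; have E11 := e 1 1; have E22 := e 2 2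
  simp at E01 E00 E11 E22
  have p01 : v 0 * v 1 = 0 := by
    rcases E01 with h' | h' | h'
    · exact absurd h' hβ
    · rw [h']; ring
    · rw [h']; ring
  have q01 : v 0 ^ 2 = v 1 ^ 2 := by
    have : β * v 0 ^ 2 = β * v 1 ^ 2 := by nlinarith [E00, E11]
    exact mul_left_cancel₀ hβ this
  have q12 : v 1 ^ 2 = v 2 ^ 2 := by
    have : β * v 1 ^ 2 = β * v 2 ^ 2 := by nlinarith [E11, E22]
    exact mul_left_cancel₀ hβ this
  nlinarith [hv, p01, q01, q12, sq_nonneg (v 0 * v 1), sq_nonneg (v 0), sq_nonneg (v 1)]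

def Rz : M3 := !![0,-1,0; 1,0,0; 0,0,1]
def Rx : M3 := !![1,0,0; 0,0,-1; 0,1,0]

lemma Rz_mem : Rz ∈ SO3 := by
  constructor
  · ext i j
    fin_cases i <;> fin_cases j <;>
      simp [Rz, Matrix.mul_apply, Fin.sum_univ_three, Matrix.one_apply,
        -Matrix.cons_mul, -Matrix.cons_transpose]
  · rw [Matrix.det_fin_three]
    simp [Rz]

lemma Rx_mem : Rx ∈ SO3 := by
  constructor
  · ext i j
    fin_cases i <;> fin_cases j <;>
      simp [Rx, Matrix.mul_apply, Fin.sum_univ_three, Matrix.one_apply,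
        -Matrix.cons_mul, -Matrix.cons_transpose]
  · rw [Matrix.det_fin_three]
    simp [Rx]

lemma Rz_mulVec (v : Fin 3 → ℝ) : Rz *ᵥ v = ![-v 1, v 0, v 2] := by
  ext i
  fin_cases i <;> simp [Rz, Matrix.mulVec, dotProduct, Fin.sum_univ_three]

lemma Rx_mulVec (v : Fin 3 → ℝ) : Rx *ᵥ v = ![v 0, -v 2, v 1] := by
  ext i
  fin_cases i <;> simp [Rx, Matrix.mulVec, dotProduct, Fin.sum_univ_three]

lemma pm_rig (hv : v 0 ^ 2 + v 1 ^ 2 + v 2 ^ 2 = 1)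
    (hz : pm ![-v 1, v 0, v 2] = pm v) (hx : pm ![v 0, -v 2, v 1] = pm v) : False := by
  have ez : ∀ i j : Fin 3, (![-v 1, v 0, v 2] : Fin 3 → ℝ) i * ![-v 1, v 0, v 2] j = v i * v j :=
    fun i j => congrFun (congrFun hz i) j
  have ex : ∀ i j : Fin 3, (![v 0, -v 2, v 1] : Fin 3 → ℝ) i * ![v 0, -v 2, v 1] j = v i * v j :=
    fun i j => congrFun (congrFun hx i) j
  have z00 := ez 0 0; have z01 := ez 0 1; have z02 := ez 0 2; have z12 := ez 1 2
  have x11 := ex 1 1; have x12 := ex 1 2; have x02 := ex 0 2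
  simp at z00 z01 z02 z12 x11 x12 x02
  nlinarith [hv, z00, z01, z02, z12, x11, x12, x02,
    sq_nonneg (v 0), sq_nonneg (v 1), sq_nonneg (v 2),
    sq_nonneg (v 0 * v 1), sq_nonneg (v 1 * v 2), sq_nonneg (v 0 * v 2)]

/-- mulVec of the standard form. -/
lemma form_mulVec (α β : ℝ) (v x : Fin 3 → ℝ) :
    (α • 1 + β • pm v) *ᵥ x = α • x + (β * (v ⬝ᵥ x)) • v := by
  rw [Matrix.add_mulVec, Matrix.smul_mulVec, Matrix.smul_mulVec,
    Matrix.one_mulVec, pm_mulVec, smul_smul]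

end
end TI

open TI in
/-- An `n`-tuple `(a₁, …, aₙ)` of real symmetric `3 × 3` matrices is
transversely isotropic (some unit vector's axis rotations fix every `aₖ`, but the family
is not isotropic) iff there is an index `j` with: `aⱼ` not a multiple of the identity,
`aⱼ × aⱼ² = 0`, and `aⱼ × aₖ = 0` for every `k`. -/
theorem family_transversely_isotropic_iff
    (n : ℕ) (a : Fin n → Matrix (Fin 3) (Fin 3) ℝ) (ha : ∀ k, (a k)ᵀ = a k) :
    ((∃ v : Fin 3 → ℝ, (∑ i, v i ^ 2) = 1 ∧
        ∀ g ∈ SO3, g.mulVec v = v → ∀ k, g * a k * gᵀ = a k) ∧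
      ¬ (∀ g ∈ SO3, ∀ k, g * a k * gᵀ = a k)) ↔
    (∃ j, a j ≠ ((a j).trace / 3) • (1 : Matrix (Fin 3) (Fin 3) ℝ) ∧
      (∀ x : Fin 3 → ℝ, det3 x ((a j).mulVec x) ((a j * a j).mulVec x) = 0) ∧
      ∀ k, ∀ x : Fin 3 → ℝ, det3 x ((a j).mulVec x) ((a k).mulVec x) = 0) := by
  constructor
  · rintro ⟨⟨v, hvsum, hfix⟩, hniso⟩
    have hv : v 0 ^ 2 + v 1 ^ 2 + v 2 ^ 2 = 1 := by
      rw [Fin.sum_univ_three] at hvsum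
      exact hvsum
    have hform : ∀ k, ∃ α β : ℝ, a k = α • 1 + β • pm v := by
      intro k
      exact classify hv (ha k)
        (hfix (rot1 v) (rot1_mem hv) (rot1_fix hv) k)
        (hfix (rot2 v) (rot2_mem hv) (rot2_fix hv) k)
    choose α β hab using hform
    have hj : ∃ j, β j ≠ 0 := by
      by_contra h
      push_neg at h
      apply hniso
      intro g hg k
      rw [hab k, h k, zero_smul, add_zero, mul_smul_comm, mul_one, smul_mul_assoc, hg.1]
    obtain ⟨j, hβj⟩ := hj
    refine ⟨j, ?_, ?_, ?_⟩
    · rw [hab j]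
      exact not_scalar hv hβj
    · intro x
      rw [hab j, ← Matrix.mulVec_mulVec, form_mulVec, form_mulVec]
      simp only [det3_expand, Pi.add_apply, Pi.smul_apply, smul_eq_mul,
        dotProduct, Fin.sum_univ_three]
      ring
    · intro k x
      rw [hab j, hab k, form_mulVec, form_mulVec]
      simp only [det3_expand, Pi.add_apply, Pi.smul_apply, smul_eq_mul,
        dotProduct, Fin.sum_univ_three]
      ring
  · rintro ⟨j, hns, hvan, hcross⟩
    obtain ⟨v, αj, βj, hv, hform⟩ := spec (ha j) hvan
    have hβj : βj ≠ 0 := by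
      intro h
      apply hns
      rw [hform, h, zero_smul, add_zero]
      have htr : (αj • (1 : Matrix (Fin 3) (Fin 3) ℝ)).trace = 3 * αj := by
        rw [Matrix.trace_smul, Matrix.trace_one]
        simp
        ring
      rw [htr]
      norm_num
    have hformk : ∀ k, ∃ γ δ : ℝ, a k = γ • 1 + δ • pm v := by
      intro k
      apply flat hv (ha k)
      apply lagrange hv
      intro y
      have h := hcross k y
      rw [hform, form_mulVec] at h
      have h2 : βj * ((v 0 * y 0 + v 1 * y 1 + v 2 * y 2) * det3 y v ((a k) *ᵥ y)) = 0 := by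
        simp only [det3_expand, Pi.add_apply, Pi.smul_apply, smul_eq_mul,
          dotProduct, Fin.sum_univ_three] at h ⊢
        linear_combination h
      rcases mul_eq_zero.mp h2 with h3 | h3
      · exact absurd h3 hβj
      · exact h3
    choose γ δ hgd using hformk
    constructor
    · refine ⟨v, ?_, ?_⟩
      · rw [Fin.sum_univ_three]
        exact hv
      · intro g hg hgv k
        rw [hgd k, conj_form hg.1, hgv]
    · intro hiso
      have hz := hiso Rz Rz_mem j
      have hx := hiso Rx Rx_mem j
      rw [hform, conj_form Rz_mem.1, Rz_mulVec] at hz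
      rw [hform, conj_form Rx_mem.1, Rx_mulVec] at hx
      have pz : pm ![-v 1, v 0, v 2] = pm v :=
        smul_right_injective M3 hβj (add_left_cancel hz)
      have px : pm ![v 0, -v 2, v 1] = pm v :=
        smul_right_injective M3 hβj (add_left_cancel hx)
      exact pm_rig hv pz px
end
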